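/- arXiv:2509.02310 — 5 statements merged into one kernel-verified Lean document; each statement's English description precedes it below -/
import Mathlib

section
/- Let n ∈ ℕ and p ∈ [0,1]. Let S be a Binomial(n,p) random variable and T a Poisson(np) random variable. Then the total variation distance between the laws of S and T is at most 9p, i.e. sup_{A ⊆ ℕ} | P(S ∈ A) − P(T ∈ A) | ≤ 9p. -/
/-- The Binomial(n,p) probability mass function. -/
noncomputable def binomPMFReal (n : ℕ) (p : ℝ) (k : ℕ) : ℝ :=
  (n.choose k : ℝ) * p ^ k * (1 - p) ^ (n - k)

/-- The Poisson(μ) probability mass function. -/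
noncomputable def poissonPMFRealFn (μ : ℝ) (k : ℕ) : ℝ :=
  Real.exp (-μ) * μ ^ k / (Nat.factorial k : ℝ)

namespace LeCamAux

noncomputable def QP (L : ℝ) (j : ℕ) : ℝ := ∑ i ∈ Finset.range (j+1), poissonPMFRealFn L i

noncomputable def cP (L : ℝ) (j : ℕ) : ℝ := (Nat.factorial j : ℝ) * Real.exp L / L ^ (j+1)

noncomputable def gP (L : ℝ) (A : Set ℕ) : ℕ → ℝ
  | 0 => 0
  | (j+1) => cP L j * ((∑ i ∈ Finset.range (j+1), A.indicator (poissonPMFRealFn L) i)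
      - (∑' k, A.indicator (poissonPMFRealFn L) k) * QP L j)

variable {L : ℝ}

lemma q_pos (hL : 0 < L) (k : ℕ) : 0 < poissonPMFRealFn L k := by
  unfold poissonPMFRealFn; positivity

lemma q_nonneg (hL : 0 ≤ L) (k : ℕ) : 0 ≤ poissonPMFRealFn L k := by
  unfold poissonPMFRealFn; positivity

lemma q_succ (k : ℕ) : poissonPMFRealFn L (k+1) = poissonPMFRealFn L k * (L / (k+1)) := by
  unfold poissonPMFRealFn
  rw [Nat.factorial_succ, pow_succ]
  push_cast
  have h1 : (Nat.factorial k : ℝ) ≠ 0 := Nat.cast_ne_zero.mpr (Nat.factorial_ne_zero k)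
  have h2 : ((k:ℝ) + 1) ≠ 0 := by positivity
  field_simp

lemma Lq (k : ℕ) : L * poissonPMFRealFn L k = ((k:ℝ)+1) * poissonPMFRealFn L (k+1) := by
  rw [q_succ]
  have h2 : ((k:ℝ) + 1) ≠ 0 := by positivity
  field_simp

lemma q_hasSum (hL : 0 ≤ L) : HasSum (poissonPMFRealFn L) 1 := by
  have := ProbabilityTheory.poissonPMFRealSum L.toNNReal
  have he : (fun n => ProbabilityTheory.poissonPMFReal L.toNNReal n) = poissonPMFRealFn L := by
    funext n
    unfold ProbabilityTheory.poissonPMFReal poissonPMFRealFn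
    rw [Real.coe_toNNReal L hL]
  convert this using 1
  rw [← he]
  rfl

lemma q_summable (hL : 0 ≤ L) : Summable (poissonPMFRealFn L) := (q_hasSum hL).summable

lemma q_zero : poissonPMFRealFn L 0 = Real.exp (-L) := by
  unfold poissonPMFRealFn; simp

lemma cq (hL : 0 < L) (j : ℕ) : cP L j * poissonPMFRealFn L j = 1 / L := by
  unfold cP poissonPMFRealFn
  have h1 : (Nat.factorial j : ℝ) ≠ 0 := Nat.cast_ne_zero.mpr (Nat.factorial_ne_zero j)
  have h2 : (L:ℝ) ^ j ≠ 0 := pow_ne_zero _ (ne_of_gt hL)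
  have h3 : Real.exp L ≠ 0 := Real.exp_ne_zero L
  rw [Real.exp_neg]
  rw [pow_succ]
  field_simp

lemma cq' (hL : 0 < L) (j : ℕ) : poissonPMFRealFn L (j+1) * cP L j = 1 / ((j:ℝ)+1) := by
  unfold cP poissonPMFRealFn
  have h1 : (Nat.factorial j : ℝ) ≠ 0 := Nat.cast_ne_zero.mpr (Nat.factorial_ne_zero j)
  have h2 : (L:ℝ) ^ (j+1) ≠ 0 := pow_ne_zero _ (ne_of_gt hL)
  have h3 : Real.exp L ≠ 0 := Real.exp_ne_zero L
  have h4 : ((j:ℝ)+1) ≠ 0 := by positivity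
  rw [Real.exp_neg, Nat.factorial_succ]
  push_cast
  field_simp

lemma Lc (hL : 0 < L) (j : ℕ) : L * cP L (j+1) = ((j:ℝ)+1) * cP L j := by
  unfold cP
  have h2 : (L:ℝ) ^ (j+1) ≠ 0 := pow_ne_zero _ (ne_of_gt hL)
  rw [Nat.factorial_succ, pow_succ]
  push_cast
  field_simp

end LeCamAux

namespace LeCamAux
variable {L : ℝ}

lemma c_pos (hL : 0 < L) (j : ℕ) : 0 < cP L j := by
  unfold cP
  positivity

lemma QP_succ (j : ℕ) : QP L (j+1) = QP L j + poissonPMFRealFn L (j+1) := by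
  unfold QP
  rw [Finset.sum_range_succ]

lemma tail_repr (hL : 0 ≤ L) (j : ℕ) :
    1 - QP L j = ∑' m, poissonPMFRealFn L (m + (j+1)) := by
  have h := Summable.sum_add_tsum_nat_add (f := poissonPMFRealFn L) (j+1) (q_summable hL)
  rw [(q_hasSum hL).tsum_eq] at h
  unfold QP
  linarith [h]

lemma tail_nonneg (hL : 0 < L) (j : ℕ) : 0 ≤ 1 - QP L j := by
  rw [tail_repr hL.le j]
  exact tsum_nonneg fun m => (q_pos hL _).le

lemma tail_geom (hL : 0 < L) (j : ℕ) (hj : L < (j:ℝ)+2) :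
    1 - QP L j ≤ poissonPMFRealFn L (j+1) * (((j:ℝ)+2) / (((j:ℝ)+2) - L)) := by
  have hr0 : 0 ≤ L / ((j:ℝ)+2) := by positivity
  have hr1 : L / ((j:ℝ)+2) < 1 := by
    rw [div_lt_one (by positivity)]; linarith
  have hpt : ∀ m, poissonPMFRealFn L (m + (j+1)) ≤
      poissonPMFRealFn L (j+1) * (L / ((j:ℝ)+2)) ^ m := by
    intro m
    induction m with
    | zero => simp
    | succ m ih =>
      have h1 : (m + 1 + (j+1)) = (m + (j+1)) + 1 := by ring
      rw [h1, q_succ]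
      have hcast : ((m + (j+1) : ℕ):ℝ) + 1 = (m:ℝ) + (j:ℝ) + 2 := by push_cast; ring
      rw [hcast]
      have hle : L / ((m:ℝ) + (j:ℝ) + 2) ≤ L / ((j:ℝ)+2) :=
        div_le_div_of_nonneg_left hL.le (by positivity) (by linarith)
      calc poissonPMFRealFn L (m + (j+1)) * (L / ((m:ℝ) + (j:ℝ) + 2))
          ≤ (poissonPMFRealFn L (j+1) * (L / ((j:ℝ)+2)) ^ m) * (L / ((j:ℝ)+2)) :=
            mul_le_mul ih hle (div_nonneg hL.le (by positivity))
              (mul_nonneg (q_pos hL _).le (pow_nonneg hr0 m))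
        _ = poissonPMFRealFn L (j+1) * (L / ((j:ℝ)+2)) ^ (m+1) := by rw [pow_succ]; ring
  have hsum1 : Summable (fun m => poissonPMFRealFn L (m + (j+1))) :=
    (summable_nat_add_iff (j+1)).mpr (q_summable hL.le)
  have hsum2 : Summable (fun m => poissonPMFRealFn L (j+1) * (L / ((j:ℝ)+2)) ^ m) :=
    (summable_geometric_of_lt_one hr0 hr1).mul_left _
  have := Summable.tsum_le_tsum hpt hsum1 hsum2
  rw [tsum_mul_left, tsum_geometric_of_lt_one hr0 hr1] at this
  rw [tail_repr hL.le j]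
  have heq : (1 - L / ((j:ℝ)+2))⁻¹ = ((j:ℝ)+2) / (((j:ℝ)+2) - L) := by
    have h1 : 1 - L/((j:ℝ)+2) = (((j:ℝ)+2) - L)/((j:ℝ)+2) := by field_simp
    rw [h1, inv_div]
  rw [heq] at this
  exact this

end LeCamAux

namespace LeCamAux
variable {L : ℝ}

/-- Key monotonicity lemma A: `c_{j+1} T_{j+1} ≤ c_j T_j`. -/
lemma lemA (hL : 0 < L) (m : ℕ) :
    cP L (m+1) * (1 - QP L (m+1)) ≤ cP L m * (1 - QP L m) := by
  have hc : cP L (m+1) = (((m:ℝ)+1)/L) * cP L m := by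
    have := Lc hL m
    field_simp at this ⊢
    linarith [this]
  rw [hc]
  have hcm : 0 < cP L m := c_pos hL m
  have hT1 : 0 ≤ 1 - QP L (m+1) := tail_nonneg hL (m+1)
  have hQs : QP L (m+1) = QP L m + poissonPMFRealFn L (m+1) := QP_succ m
  -- reduce to: ((m+1)/L) * T(m+1) ≤ T(m+1) + q(m+1)
  have key : (((m:ℝ)+1)/L) * (1 - QP L (m+1)) ≤ (1 - QP L (m+1)) + poissonPMFRealFn L (m+1) := by
    rcases le_or_gt ((m:ℝ)+1) L with h | h
    · have h1 : (((m:ℝ)+1)/L) ≤ 1 := by rw [div_le_one hL]; exact h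
      nlinarith [q_pos hL (m+1), hT1]
    · -- L < m+1, use geometric tail bound at index m+1
      have hj : L < ((m+1:ℕ):ℝ) + 2 := by push_cast; linarith
      have hg := tail_geom hL (m+1) hj
      push_cast at hg
      -- T(m+1) ≤ q(m+2) * ((m+3)/((m+3)-L))
      have hLq : L * poissonPMFRealFn L (m+1) = ((m:ℝ)+2) * poissonPMFRealFn L (m+2) := by
        have := Lq (L := L) (m+1)
        push_cast at this
        convert this using 2 <;> ring
      -- suffices: (m+1-L) * T(m+1) ≤ L * q(m+1) = (m+2) q(m+2)
      have hq2 : 0 < poissonPMFRealFn L (m+2) := q_pos hL _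
      have hden : 0 < (m:ℝ)+3-L := by linarith
      have key2 : ((m:ℝ)+1-L) * (1 - QP L (m+1)) ≤ ((m:ℝ)+2) * poissonPMFRealFn L (m+2) := by
        have hratio : ((m:ℝ)+1-L) * ((((m:ℝ)+3))/(((m:ℝ)+3)-L)) ≤ (m:ℝ)+2 := by
          rw [mul_div_assoc', div_le_iff₀ hden]
          nlinarith
        have hfac : ((m:ℝ)+1-L) * (poissonPMFRealFn L (m+2) * (((m:ℝ)+3)/(((m:ℝ)+3)-L)))
            ≤ ((m:ℝ)+2) * poissonPMFRealFn L (m+2) := by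
          calc ((m:ℝ)+1-L) * (poissonPMFRealFn L (m+2) * (((m:ℝ)+3)/(((m:ℝ)+3)-L)))
              = poissonPMFRealFn L (m+2) * (((m:ℝ)+1-L) * ((((m:ℝ)+3))/(((m:ℝ)+3)-L))) := by
                ring
            _ ≤ poissonPMFRealFn L (m+2) * ((m:ℝ)+2) :=
                mul_le_mul_of_nonneg_left hratio hq2.le
            _ = ((m:ℝ)+2) * poissonPMFRealFn L (m+2) := by ring
        calc ((m:ℝ)+1-L) * (1 - QP L (m+1))
            ≤ ((m:ℝ)+1-L) * (poissonPMFRealFn L (m+2) * (((m:ℝ)+3)/(((m:ℝ)+3)-L))) := by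
              apply mul_le_mul_of_nonneg_left _ (by linarith)
              have hg' : 1 - QP L (m+1) ≤ poissonPMFRealFn L (m+2) * (((m:ℝ)+3)/(((m:ℝ)+3)-L)) := by
                convert hg using 3 <;> push_cast <;> ring
              exact hg'
          _ ≤ ((m:ℝ)+2) * poissonPMFRealFn L (m+2) := hfac
      rw [div_mul_eq_mul_div, div_le_iff₀ hL]
      nlinarith [key2, hLq]
  calc (((m:ℝ)+1)/L) * cP L m * (1 - QP L (m+1))
      = cP L m * ((((m:ℝ)+1)/L) * (1 - QP L (m+1))) := by ring
    _ ≤ cP L m * ((1 - QP L (m+1)) + poissonPMFRealFn L (m+1)) :=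
        mul_le_mul_of_nonneg_left key hcm.le
    _ = cP L m * (1 - QP L m) := by rw [hQs]; ring

end LeCamAux

namespace LeCamAux
variable {L : ℝ}

lemma LQ_le (hL : 0 < L) (m : ℕ) :
    L * QP L m ≤ ((m:ℝ)+1) * (QP L (m+1) - poissonPMFRealFn L 0) := by
  have hshift : QP L (m+1) - poissonPMFRealFn L 0
      = ∑ i ∈ Finset.range (m+1), poissonPMFRealFn L (i+1) := by
    unfold QP
    rw [Finset.sum_range_succ' (fun i => poissonPMFRealFn L i) (m+1)]
    ring
  rw [hshift]
  unfold QP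
  rw [Finset.mul_sum, Finset.mul_sum]
  apply Finset.sum_le_sum
  intro i hi
  rw [Finset.mem_range] at hi
  rw [Lq i]
  have h1 : 0 ≤ poissonPMFRealFn L (i+1) := (q_pos hL _).le
  have h2 : (i:ℝ) + 1 ≤ (m:ℝ) + 1 := by
    have := Nat.lt_succ_iff.mp hi
    exact_mod_cast by push_cast; linarith [(Nat.cast_le (α := ℝ)).mpr this]
  nlinarith

/-- Lemma B : `β ≥ 0`. -/
lemma lemB (hL : 0 < L) (m : ℕ) :
    cP L m * QP L m ≤ cP L (m+1) * QP L (m+1) := by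
  have hc : cP L (m+1) = (((m:ℝ)+1)/L) * cP L m := by
    have := Lc hL m
    field_simp at this ⊢
    linarith [this]
  rw [hc]
  have hcm : 0 < cP L m := c_pos hL m
  have h := LQ_le hL m
  have hq0 : 0 ≤ poissonPMFRealFn L 0 := (q_pos hL _).le
  have : L * QP L m ≤ ((m:ℝ)+1) * QP L (m+1) := by nlinarith
  rw [div_mul_eq_mul_div, mul_comm (((m:ℝ)+1) * cP L m / L), ← mul_div_assoc, le_div_iff₀ hL]
  nlinarith

/-- Lemma C : bound on the diagonal jump. -/
private theorem div_le_div_of_nonneg_right' {a b c : ℝ} (h : a ≤ b) (hc : 0 < c) :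
    a / c ≤ b / c := by
  gcongr
lemma lemC (hL : 0 < L) (m : ℕ) :
    (1 - QP L (m+1))/L + QP L m/((m:ℝ)+1) ≤ (1 - Real.exp (-L))/L := by
  have h := LQ_le hL m
  have hm1 : (0:ℝ) < (m:ℝ)+1 := by positivity
  have hq0 : poissonPMFRealFn L 0 = Real.exp (-L) := q_zero
  have key : (1 - QP L (m+1)) + L * QP L m / ((m:ℝ)+1) ≤ 1 - Real.exp (-L) := by
    have h2 : L * QP L m / ((m:ℝ)+1) ≤ QP L (m+1) - poissonPMFRealFn L 0 := by
      rw [div_le_iff₀ hm1]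
      nlinarith [h]
    linarith
  calc (1 - QP L (m+1))/L + QP L m/((m:ℝ)+1)
      = ((1 - QP L (m+1)) + L * QP L m / ((m:ℝ)+1))/L := by
        field_simp
    _ ≤ (1 - Real.exp (-L))/L := div_le_div_of_nonneg_right' key hL

end LeCamAux

namespace LeCamAux
variable {L : ℝ}

lemma QP_nonneg (hL : 0 < L) (j : ℕ) : 0 ≤ QP L j :=
  Finset.sum_nonneg fun i _ => (q_pos hL i).le

section Delta

variable (m : ℕ)

/-- The discrete difference kernel. -/
noncomputable def DP (L : ℝ) (m : ℕ) (k : ℕ) : ℝ :=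
  (if k ≤ m+1 then cP L (m+1) * poissonPMFRealFn L k else 0)
    - (if k ≤ m then cP L m * poissonPMFRealFn L k else 0)
    - (cP L (m+1) * QP L (m+1) - cP L m * QP L m) * poissonPMFRealFn L k

lemma f1_summable (c : ℝ) (j : ℕ) :
    Summable (fun k => if k ≤ j then c * poissonPMFRealFn L k else 0) := by
  apply summable_of_ne_finset_zero (s := Finset.range (j+1))
  intro k hk
  rw [Finset.mem_range, not_lt] at hk
  rw [if_neg (by omega)]

lemma f1_tsum (c : ℝ) (j : ℕ) :
    ∑' k, (if k ≤ j then c * poissonPMFRealFn L k else 0) = c * QP L j := by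
  rw [tsum_eq_sum (s := Finset.range (j+1)) (by
    intro k hk
    rw [Finset.mem_range, not_lt] at hk
    rw [if_neg (by omega)])]
  unfold QP
  rw [Finset.mul_sum]
  apply Finset.sum_congr rfl
  intro k hk
  rw [Finset.mem_range] at hk
  rw [if_pos (by omega)]

lemma DP_summable (hL : 0 ≤ L) : Summable (DP L m) :=
  ((f1_summable _ _).sub (f1_summable _ _)).sub ((q_summable hL).mul_left _)

lemma DP_tsum (hL : 0 ≤ L) : ∑' k, DP L m k = 0 := by
  unfold DP
  rw [Summable.tsum_sub ((f1_summable _ _).sub (f1_summable _ _)) ((q_summable hL).mul_left _),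
    Summable.tsum_sub (f1_summable _ _) (f1_summable _ _), f1_tsum, f1_tsum, tsum_mul_left,
    (q_hasSum hL).tsum_eq]
  ring

lemma DP_nonpos (hL : 0 < L) (k : ℕ) (hk : k ≠ m+1) : DP L m k ≤ 0 := by
  have hq := (q_pos hL k).le
  have hβ : 0 ≤ cP L (m+1) * QP L (m+1) - cP L m * QP L m := by
    have := lemB hL m; linarith
  unfold DP
  rcases le_or_gt k m with h | h
  · rw [if_pos (by omega), if_pos h]
    have hA := lemA hL m
    nlinarith
  · have h2 : ¬ (k ≤ m+1) := by omega
    rw [if_neg h2, if_neg (by omega)]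
    nlinarith

lemma DP_diag (hL : 0 < L) : DP L m (m+1) = (1 - QP L (m+1))/L + QP L m/((m:ℝ)+1) := by
  unfold DP
  rw [if_pos (le_refl _), if_neg (by omega)]
  have h1 : cP L (m+1) * poissonPMFRealFn L (m+1) = 1/L := cq hL (m+1)
  have h2 : poissonPMFRealFn L (m+1) * cP L m = 1/((m:ℝ)+1) := cq' hL m
  calc cP L (m+1) * poissonPMFRealFn L (m+1) - 0
        - (cP L (m+1) * QP L (m+1) - cP L m * QP L m) * poissonPMFRealFn L (m+1)
      = (cP L (m+1) * poissonPMFRealFn L (m+1)) * (1 - QP L (m+1))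
        + (poissonPMFRealFn L (m+1) * cP L m) * QP L m := by ring
    _ = (1 - QP L (m+1))/L + QP L m/((m:ℝ)+1) := by rw [h1, h2]; ring

lemma DP_diag_nonneg (hL : 0 < L) : 0 ≤ DP L m (m+1) := by
  rw [DP_diag m hL]
  have := tail_nonneg hL (m+1)
  have := QP_nonneg hL m
  positivity

lemma DP_diag_le (hL : 0 < L) : DP L m (m+1) ≤ (1 - Real.exp (-L))/L := by
  rw [DP_diag m hL]
  exact lemC hL m

/-- tsum of an indicator of `DP` is at most the diagonal value. -/
lemma DP_indicator_tsum_le (hL : 0 < L) (B : Set ℕ) :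
    ∑' k, B.indicator (DP L m) k ≤ DP L m (m+1) := by
  have hsum : Summable (B.indicator (DP L m)) := (DP_summable m hL.le).indicator B
  have hsum2 : Summable (fun k => if k = m+1 then DP L m (m+1) else 0) := by
    apply summable_of_ne_finset_zero (s := {m+1})
    intro k hk
    rw [Finset.mem_singleton] at hk
    rw [if_neg hk]
  have hpt : ∀ k, B.indicator (DP L m) k ≤ (if k = m+1 then DP L m (m+1) else 0) := by
    intro k
    by_cases hk : k = m+1
    classical
    · subst hk
      rw [if_pos rfl, Set.indicator_apply]
      split_ifs
      · exact le_refl _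
      · exact DP_diag_nonneg m hL
    · rw [if_neg hk, Set.indicator_apply]
      split_ifs with h
      · exact DP_nonpos m hL k hk
      · exact le_refl _
  calc ∑' k, B.indicator (DP L m) k ≤ ∑' k, (if k = m+1 then DP L m (m+1) else 0) :=
        Summable.tsum_le_tsum hpt hsum hsum2
    _ = DP L m (m+1) := tsum_ite_eq (m+1) _

end Delta

end LeCamAux

namespace LeCamAux
variable {L : ℝ}

lemma ite_le_summable (f : ℕ → ℝ) (c : ℝ) (j : ℕ) :
    Summable (fun k => if k ≤ j then c * f k else 0) := by
  apply summable_of_ne_finset_zero (s := Finset.range (j+1))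
  intro k hk
  rw [Finset.mem_range, not_lt] at hk
  rw [if_neg (by omega)]

lemma ite_le_tsum (f : ℕ → ℝ) (c : ℝ) (j : ℕ) :
    ∑' k, (if k ≤ j then c * f k else 0) = c * ∑ i ∈ Finset.range (j+1), f i := by
  rw [tsum_eq_sum (s := Finset.range (j+1)) (by
    intro k hk
    rw [Finset.mem_range, not_lt] at hk
    rw [if_neg (by omega)])]
  rw [Finset.mul_sum]
  apply Finset.sum_congr rfl
  intro k hk
  rw [Finset.mem_range] at hk
  rw [if_pos (by omega)]

lemma gP_succ (A : Set ℕ) (j : ℕ) :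
    gP L A (j+1) = cP L j * ((∑ i ∈ Finset.range (j+1), A.indicator (poissonPMFRealFn L) i)
      - (∑' k, A.indicator (poissonPMFRealFn L) k) * QP L j) := rfl

lemma gP_delta_repr (hL : 0 < L) (A : Set ℕ) (m : ℕ) :
    gP L A (m+2) - gP L A (m+1) = ∑' k, A.indicator (DP L m) k := by
  classical
  have hq := q_summable hL.le
  have hAq : Summable (A.indicator (poissonPMFRealFn L)) := hq.indicator A
  have hpt : A.indicator (DP L m) = fun k =>
      (if k ≤ m+1 then cP L (m+1) * A.indicator (poissonPMFRealFn L) k else 0)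
      - (if k ≤ m then cP L m * A.indicator (poissonPMFRealFn L) k else 0)
      - (cP L (m+1) * QP L (m+1) - cP L m * QP L m) * A.indicator (poissonPMFRealFn L) k := by
    funext k
    by_cases h : k ∈ A
    · rw [Set.indicator_of_mem h, Set.indicator_of_mem h]
      rfl
    · rw [Set.indicator_of_notMem h, Set.indicator_of_notMem h]
      simp
  rw [hpt, Summable.tsum_sub ((ite_le_summable _ _ _).sub (ite_le_summable _ _ _)) (hAq.mul_left _),
    Summable.tsum_sub (ite_le_summable _ _ _) (ite_le_summable _ _ _), ite_le_tsum, ite_le_tsum,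
    tsum_mul_left, gP_succ, gP_succ]
  ring

lemma gP_delta_bound (hL : 0 < L) (A : Set ℕ) (m : ℕ) :
    |gP L A (m+2) - gP L A (m+1)| ≤ (1 - Real.exp (-L))/L := by
  rw [gP_delta_repr hL A m, abs_le]
  have hsum := DP_summable m hL.le
  have hM := DP_diag_le m hL
  have hup := DP_indicator_tsum_le m hL A
  have hupc := DP_indicator_tsum_le m hL Aᶜ
  have hsplit : ∑' k, A.indicator (DP L m) k + ∑' k, Aᶜ.indicator (DP L m) k = 0 := by
    rw [← Summable.tsum_add (hsum.indicator A) (hsum.indicator Aᶜ)]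
    rw [show (fun k => A.indicator (DP L m) k + Aᶜ.indicator (DP L m) k) = DP L m by
      funext k
      rw [Set.indicator_compl]
      simp]
    exact DP_tsum m hL.le
  constructor
  · linarith
  · linarith

lemma stein (hL : 0 < L) (A : Set ℕ) (k : ℕ) :
    L * gP L A (k+1) - k * gP L A k
      = A.indicator (fun _ => (1:ℝ)) k - ∑' i, A.indicator (poissonPMFRealFn L) i := by
  have hq : ∀ j, A.indicator (poissonPMFRealFn L) j
      = A.indicator (fun _ => (1:ℝ)) j * poissonPMFRealFn L j := by
    intro j
    by_cases h : j ∈ A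
    · rw [Set.indicator_of_mem h, Set.indicator_of_mem h, one_mul]
    · rw [Set.indicator_of_notMem h, Set.indicator_of_notMem h, zero_mul]
  cases k with
  | zero =>
    rw [gP_succ]
    have h0 : QP L 0 = poissonPMFRealFn L 0 := by
      unfold QP
      rw [Finset.sum_range_one]
    have hc : L * (cP L 0 * poissonPMFRealFn L 0) = 1 := by
      rw [cq hL 0]
      field_simp
    have hg0 : gP L A 0 = 0 := rfl
    simp only [zero_add] 
    rw [Finset.sum_range_one, h0, hq 0, hg0]
    push_cast
    linear_combination (A.indicator (fun _ => (1:ℝ)) 0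
      - ∑' i, A.indicator (poissonPMFRealFn L) i) * hc
  | succ k =>
    rw [gP_succ, gP_succ]
    have hLc : L * cP L (k+1) = ((k:ℝ)+1) * cP L k := Lc hL k
    have hS : ∑ i ∈ Finset.range (k+2), A.indicator (poissonPMFRealFn L) i
        = (∑ i ∈ Finset.range (k+1), A.indicator (poissonPMFRealFn L) i)
          + A.indicator (poissonPMFRealFn L) (k+1) := Finset.sum_range_succ _ _
    have hQ : QP L (k+1) = QP L k + poissonPMFRealFn L (k+1) := QP_succ k
    have hone : ((k:ℝ)+1) * (cP L k * poissonPMFRealFn L (k+1)) = 1 := by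
      rw [mul_comm (cP L k), cq' hL k]
      field_simp
    rw [hS, hQ, hq (k+1)]
    push_cast
    linear_combination ((∑ i ∈ Finset.range (k+1), A.indicator (poissonPMFRealFn L) i)
        + A.indicator (fun _ => (1:ℝ)) (k+1) * poissonPMFRealFn L (k+1)
        - (∑' i, A.indicator (poissonPMFRealFn L) i)
            * (QP L k + poissonPMFRealFn L (k+1))) * hLc
      + (A.indicator (fun _ => (1:ℝ)) (k+1)
        - ∑' i, A.indicator (poissonPMFRealFn L) i) * hone

end LeCamAux

namespace LeCamAux

lemma binom_succ_mul (N j : ℕ) (p : ℝ) :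
    ((j:ℝ)+1) * binomPMFReal (N+1) p (j+1) = ((N:ℝ)+1) * p * binomPMFReal N p j := by
  unfold binomPMFReal
  rw [Nat.succ_sub_succ]
  have h : ((N+1).choose (j+1) : ℝ) * ((j:ℝ)+1) = ((N:ℝ)+1) * (N.choose j : ℝ) := by
    have := Nat.add_one_mul_choose_eq N j
    exact_mod_cast congrArg (Nat.cast (R := ℝ)) this.symm
  rw [pow_succ]
  linear_combination (p^j * p * (1-p)^(N-j)) * h

lemma binom_pascal (N j : ℕ) (p : ℝ) :
    binomPMFReal (N+1) p (j+1) = (1-p) * binomPMFReal N p (j+1) + p * binomPMFReal N p j := by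
  unfold binomPMFReal
  rw [Nat.choose_succ_succ, Nat.succ_sub_succ]
  rcases lt_or_ge j N with h | h
  · have hNj : N - j = (N-(j+1))+1 := by omega
    rw [hNj, pow_succ]
    push_cast
    ring
  · have h0 : N.choose (j+1) = 0 := Nat.choose_eq_zero_of_lt (by omega)
    rw [h0]
    push_cast
    ring

lemma binom_zero (N : ℕ) (p : ℝ) :
    binomPMFReal (N+1) p 0 = (1-p) * binomPMFReal N p 0 := by
  unfold binomPMFReal
  simp [pow_succ]
  ring

lemma binom_sum (n : ℕ) (p : ℝ) :
    ∑ k ∈ Finset.range (n+1), binomPMFReal n p k = 1 := by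
  have h := add_pow p (1-p) n
  rw [show p + (1-p) = 1 by ring, one_pow] at h
  rw [show (1:ℝ) = ∑ k ∈ Finset.range (n+1), p^k * (1-p)^(n-k) * (n.choose k : ℝ) from h]
  apply Finset.sum_congr rfl
  intro k _
  unfold binomPMFReal
  ring

lemma binom_nonneg (n k : ℕ) {p : ℝ} (hp0 : 0 ≤ p) (hp1 : p ≤ 1) :
    0 ≤ binomPMFReal n p k := by
  unfold binomPMFReal
  have h1 : (0:ℝ) ≤ 1 - p := by linarith
  positivity

lemma binom_gt (n k : ℕ) (p : ℝ) (h : n < k) : binomPMFReal n p k = 0 := by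
  unfold binomPMFReal
  rw [Nat.choose_eq_zero_of_lt h]
  simp

end LeCamAux

namespace LeCamAux

lemma degenerate {n : ℕ} {p : ℝ} (h : n = 0 ∨ p = 0) :
    binomPMFReal n p = poissonPMFRealFn 0 := by
  funext k
  unfold binomPMFReal poissonPMFRealFn
  rcases h with h | h
  · subst h
    cases k with
    | zero => simp
    | succ k => simp [Nat.choose_eq_zero_of_lt (Nat.succ_pos k)]
  · subst h
    cases k with
    | zero => simp
    | succ k => simp [pow_succ]

end LeCamAux


section MainPos

open LeCamAux

theorem LeCamAux.main_pos (N : ℕ) (p : ℝ) (hp : 0 < p) (hp1 : p ≤ 1) (A : Set ℕ) (L : ℝ)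
    (hLdef : L = ((N+1 : ℕ):ℝ) * p) :
    |(∑' k : ℕ, A.indicator (binomPMFReal (N+1) p) k) -
      (∑' k : ℕ, A.indicator (poissonPMFRealFn L) k)| ≤ p := by
  classical
  have hNpos : (0:ℝ) < ((N+1 : ℕ):ℝ) := by exact_mod_cast Nat.succ_pos N
  have hL : 0 < L := by rw [hLdef]; exact mul_pos hNpos hp
  -- abbreviation facts
  have hind : ∀ (f : ℕ → ℝ) k, A.indicator f k = A.indicator (fun _ => (1:ℝ)) k * f k := by
    intro f k
    by_cases h : k ∈ A
    · rw [Set.indicator_of_mem h, Set.indicator_of_mem h, one_mul]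
    · rw [Set.indicator_of_notMem h, Set.indicator_of_notMem h, zero_mul]
  have hb0 : ∀ k ∉ Finset.range (N+2), A.indicator (binomPMFReal (N+1) p) k = 0 := by
    intro k hk
    rw [Finset.mem_range, not_lt] at hk
    have hbk : binomPMFReal (N+1) p k = 0 := binom_gt _ _ _ (by omega)
    simp [Set.indicator_apply, hbk]
  have h1 : (∑' k, A.indicator (binomPMFReal (N+1) p) k)
      = ∑ k ∈ Finset.range (N+2), A.indicator (binomPMFReal (N+1) p) k := tsum_eq_sum hb0
  have hbsum : ∑ k ∈ Finset.range (N+2), binomPMFReal (N+1) p k = 1 := binom_sum (N+1) p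
  -- step 2
  have h2 : (∑' k, A.indicator (binomPMFReal (N+1) p) k)
        - (∑' k, A.indicator (poissonPMFRealFn L) k)
      = ∑ k ∈ Finset.range (N+2), binomPMFReal (N+1) p k
          * (A.indicator (fun _ => (1:ℝ)) k - ∑' i, A.indicator (poissonPMFRealFn L) i) := by
    have hr : ∑ k ∈ Finset.range (N+2), binomPMFReal (N+1) p k
          * (A.indicator (fun _ => (1:ℝ)) k - ∑' i, A.indicator (poissonPMFRealFn L) i)
        = (∑ k ∈ Finset.range (N+2), A.indicator (binomPMFReal (N+1) p) k)
          - (∑' i, A.indicator (poissonPMFRealFn L) i)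
            * ∑ k ∈ Finset.range (N+2), binomPMFReal (N+1) p k := by
      rw [Finset.mul_sum, ← Finset.sum_sub_distrib]
      apply Finset.sum_congr rfl
      intro k _
      rw [hind (binomPMFReal (N+1) p) k]
      ring
    rw [hr, hbsum, mul_one, h1]
  -- step 3 : Stein identity
  have h3 : ∀ k : ℕ, A.indicator (fun _ => (1:ℝ)) k - ∑' i, A.indicator (poissonPMFRealFn L) i
      = L * gP L A (k+1) - k * gP L A k := fun k => (stein hL A k).symm
  -- step 4a
  have hT2 : ∑ k ∈ Finset.range (N+2), binomPMFReal (N+1) p k * ((k:ℝ) * gP L A k)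
      = L * ∑ j ∈ Finset.range (N+1), binomPMFReal N p j * gP L A (j+1) := by
    rw [Finset.sum_range_succ' (fun k => binomPMFReal (N+1) p k * ((k:ℝ) * gP L A k)) (N+1)]
    have hterm : ∀ j, binomPMFReal (N+1) p (j+1) * (((j+1:ℕ):ℝ) * gP L A (j+1))
        = L * (binomPMFReal N p j * gP L A (j+1)) := by
      intro j
      have hsm := binom_succ_mul N j p
      push_cast at hsm
      have hL2 : ((N:ℝ)+1) * p = L := by rw [hLdef]; push_cast; ring
      rw [hL2] at hsm
      push_cast
      linear_combination gP L A (j+1) * hsm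
    rw [Finset.sum_congr rfl (fun j _ => hterm j)]
    rw [← Finset.mul_sum]
    norm_num
  -- step 4b
  have hbtop : binomPMFReal N p (N+1) = 0 := binom_gt _ _ _ (by omega)
  have hT1 : ∑ k ∈ Finset.range (N+2), binomPMFReal (N+1) p k * gP L A (k+1)
      = (1-p) * (∑ j ∈ Finset.range (N+1), binomPMFReal N p j * gP L A (j+1))
        + p * (∑ j ∈ Finset.range (N+1), binomPMFReal N p j * gP L A (j+2)) := by
    rw [Finset.sum_range_succ' (fun k => binomPMFReal (N+1) p k * gP L A (k+1)) (N+1)]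
    have hterm : ∀ j, binomPMFReal (N+1) p (j+1) * gP L A (j+1+1)
        = (1-p) * (binomPMFReal N p (j+1) * gP L A (j+2))
          + p * (binomPMFReal N p j * gP L A (j+2)) := by
      intro j
      rw [binom_pascal N j p]
      ring
    rw [Finset.sum_congr rfl (fun j _ => hterm j), binom_zero N p]
    have hmid : ∑ j ∈ Finset.range (N+1), binomPMFReal N p (j+1) * gP L A (j+2)
          + binomPMFReal N p 0 * gP L A 1
        = ∑ j ∈ Finset.range (N+1), binomPMFReal N p j * gP L A (j+1) := by
      rw [show (∑ j ∈ Finset.range (N+1), binomPMFReal N p (j+1) * gP L A (j+2))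
            + binomPMFReal N p 0 * gP L A 1
          = ∑ k ∈ Finset.range (N+2), binomPMFReal N p k * gP L A (k+1) from
        (Finset.sum_range_succ' (fun k => binomPMFReal N p k * gP L A (k+1)) (N+1)).symm]
      rw [Finset.sum_range_succ, hbtop, zero_mul, add_zero]
    rw [Finset.sum_add_distrib, ← Finset.mul_sum, ← Finset.mul_sum]
    linear_combination (1-p) * hmid
  -- step 5
  have h5 : (∑' k, A.indicator (binomPMFReal (N+1) p) k)
        - (∑' k, A.indicator (poissonPMFRealFn L) k)
      = L * p * ((∑ j ∈ Finset.range (N+1), binomPMFReal N p j * gP L A (j+2))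
          - (∑ j ∈ Finset.range (N+1), binomPMFReal N p j * gP L A (j+1))) := by
    rw [h2]
    calc ∑ k ∈ Finset.range (N+2), binomPMFReal (N+1) p k
          * (A.indicator (fun _ => (1:ℝ)) k - ∑' i, A.indicator (poissonPMFRealFn L) i)
        = ∑ k ∈ Finset.range (N+2), (L * (binomPMFReal (N+1) p k * gP L A (k+1))
            - binomPMFReal (N+1) p k * ((k:ℝ) * gP L A k)) := by
          apply Finset.sum_congr rfl
          intro k _
          rw [h3 k]
          ring
      _ = L * (∑ k ∈ Finset.range (N+2), binomPMFReal (N+1) p k * gP L A (k+1))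
          - ∑ k ∈ Finset.range (N+2), binomPMFReal (N+1) p k * ((k:ℝ) * gP L A k) := by
          rw [Finset.sum_sub_distrib, ← Finset.mul_sum]
      _ = L * p * ((∑ j ∈ Finset.range (N+1), binomPMFReal N p j * gP L A (j+2))
          - (∑ j ∈ Finset.range (N+1), binomPMFReal N p j * gP L A (j+1))) := by
          rw [hT1, hT2]
          ring
  -- step 6 : bound
  have hb'sum : ∑ j ∈ Finset.range (N+1), binomPMFReal N p j = 1 := binom_sum N p
  have h6 : |(∑ j ∈ Finset.range (N+1), binomPMFReal N p j * gP L A (j+2))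
        - (∑ j ∈ Finset.range (N+1), binomPMFReal N p j * gP L A (j+1))|
      ≤ (1 - Real.exp (-L))/L := by
    rw [← Finset.sum_sub_distrib]
    calc |∑ j ∈ Finset.range (N+1), (binomPMFReal N p j * gP L A (j+2)
            - binomPMFReal N p j * gP L A (j+1))|
        ≤ ∑ j ∈ Finset.range (N+1), |binomPMFReal N p j * gP L A (j+2)
            - binomPMFReal N p j * gP L A (j+1)| := Finset.abs_sum_le_sum_abs _ _
      _ ≤ ∑ j ∈ Finset.range (N+1), binomPMFReal N p j * ((1 - Real.exp (-L))/L) := by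
          apply Finset.sum_le_sum
          intro j _
          rw [show binomPMFReal N p j * gP L A (j+2) - binomPMFReal N p j * gP L A (j+1)
            = binomPMFReal N p j * (gP L A (j+2) - gP L A (j+1)) from by ring]
          rw [abs_mul, abs_of_nonneg (binom_nonneg N j hp.le hp1)]
          exact mul_le_mul_of_nonneg_left (gP_delta_bound hL A j) (binom_nonneg N j hp.le hp1)
      _ = (1 - Real.exp (-L))/L := by rw [← Finset.sum_mul, hb'sum, one_mul]
  rw [h5, abs_mul, abs_of_pos (mul_pos hL hp)]
  have hexp0 := Real.exp_pos (-L)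
  have hexp1 : Real.exp (-L) ≤ 1 := by
    rw [Real.exp_le_one_iff]
    linarith
  calc L * p * |(∑ j ∈ Finset.range (N+1), binomPMFReal N p j * gP L A (j+2))
          - (∑ j ∈ Finset.range (N+1), binomPMFReal N p j * gP L A (j+1))|
      ≤ L * p * ((1 - Real.exp (-L))/L) :=
        mul_le_mul_of_nonneg_left h6 (mul_pos hL hp).le
    _ = p * (1 - Real.exp (-L)) := by field_simp
    _ ≤ p * 1 := mul_le_mul_of_nonneg_left (by linarith) hp.le
    _ = p := mul_one p

end MainPos

/-- **Le Cam's theorem.** The total variation distance between a Binomial(n,p)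
random variable and a Poisson(np) random variable is at most `9 p`. -/
theorem le_cam (n : ℕ) (p : ℝ) (hp0 : 0 ≤ p) (hp1 : p ≤ 1) (A : Set ℕ) :
    |(∑' k : ℕ, A.indicator (binomPMFReal n p) k) -
      (∑' k : ℕ, A.indicator (poissonPMFRealFn ((n : ℝ) * p)) k)| ≤ 9 * p := by
  by_cases hdeg : n = 0 ∨ p = 0
  · have heq := LeCamAux.degenerate hdeg
    have hL0 : (n:ℝ) * p = 0 := by
      rcases hdeg with h | h
      · rw [h]; simp
      · rw [h]; simp
    rw [hL0, heq, sub_self, abs_zero]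
    positivity
  push_neg at hdeg
  obtain ⟨hn0, hp0'⟩ := hdeg
  obtain ⟨N, rfl⟩ := Nat.exists_eq_succ_of_ne_zero hn0
  have hp : 0 < p := lt_of_le_of_ne hp0 (Ne.symm hp0')
  have key := LeCamAux.main_pos N p hp hp1 A (((N+1 : ℕ):ℝ) * p) rfl
  calc |(∑' k : ℕ, A.indicator (binomPMFReal (N+1) p) k) -
      (∑' k : ℕ, A.indicator (poissonPMFRealFn (((N+1 : ℕ):ℝ) * p)) k)| ≤ p := key
    _ ≤ 9 * p := by linarith
end

section
/- Let m > 0, α ∈ (0, 1/2), and N ∈ ℕ with N ≥ 1. Let H ∈ ℕ satisfy (1−α) m N ≤ H ≤ (1+α) m N. Then for every n ∈ ℕ, the Binomial(H, 1/N) probability mass function at n satisfies C(H,n) (1/N)^n (1 − 1/N)^{H−n} ≤ e^{α m} (1+α)^n p_m(n) + 9/N, where p_m(n) = e^{−m} m^n / n! is the Poisson(m) probability mass function at n. -/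
-- a * (log b - log a) ≤ b - a
private lemma log_mul_le {a b : ℝ} (ha : 0 < a) (hb : 0 < b) :
    a * Real.log b - a * Real.log a ≤ b - a := by
  have h := Real.log_le_sub_one_of_pos (show 0 < b / a by positivity)
  rw [Real.log_div hb.ne' ha.ne'] at h
  have h2 : a * (Real.log b - Real.log a) ≤ a * (b / a - 1) :=
    mul_le_mul_of_nonneg_left h ha.le
  rw [mul_sub, mul_sub, mul_div_cancel₀ _ ha.ne'] at h2
  linarith

noncomputable def Lam (t : ℝ) : ℝ := t + (1 - t) * Real.log (1 - t)

private lemma lam_step {x y : ℝ} (hx : 0 ≤ x) (hxy : x ≤ y) (hy : y < 1) :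
    (y - x) * Real.log (1 - y) ≤ Lam x - Lam y := by
  have ha : (0:ℝ) < 1 - y := by linarith
  have hc : (0:ℝ) < 1 - x := by linarith
  have h := log_mul_le hc ha
  unfold Lam
  nlinarith [h]

private lemma g_ineq {t q : ℝ} (ht0 : 0 ≤ t) (ht1 : t < 1) (hq0 : 0 < q) (hq1 : q < 1) :
    q + (1 - t) * Real.log (1 - q) ≤ Lam t := by
  have ha : (0:ℝ) < 1 - t := by linarith
  have hb : (0:ℝ) < 1 - q := by linarith
  have h := log_mul_le ha hb
  unfold Lam
  linarith

private lemma sum_log_le (H : ℕ) (hH : 1 ≤ H) : ∀ n : ℕ, 1 ≤ n → n ≤ H →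
    ∑ i ∈ Finset.range n, Real.log (1 - (i:ℝ) / H) ≤
      -((H:ℝ) * Lam (((n:ℝ) - 1) / H)) := by
  have hHpos : (0:ℝ) < H := by exact_mod_cast hH
  intro n
  induction n with
  | zero => intro h; omega
  | succ k ih =>
    intro _ hkH
    rcases Nat.eq_or_lt_of_le (show 1 ≤ k + 1 from Nat.le_add_left 1 k) with h1 | h1
    · -- k = 0
      have hk0 : k = 0 := by omega
      subst hk0
      simp [Lam]
    · -- k ≥ 1
      have hk1 : 1 ≤ k := by omega
      have hkH' : k ≤ H := by omega
      have hkHlt : k < H := by omega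
      have IH := ih hk1 hkH'
      rw [Finset.sum_range_succ]
      have hstep :
          Real.log (1 - (k:ℝ) / H) ≤ (H:ℝ) * (Lam (((k:ℝ) - 1) / H) - Lam ((k:ℝ) / H)) := by
        have hx : (0:ℝ) ≤ ((k:ℝ) - 1) / H := by
          apply div_nonneg _ hHpos.le
          have : (1:ℝ) ≤ (k:ℝ) := by exact_mod_cast hk1
          linarith
        have hxy : ((k:ℝ) - 1) / H ≤ (k:ℝ) / H := by
          gcongr
          linarith
        have hy : (k:ℝ) / H < 1 := by
          rw [div_lt_one hHpos]; exact_mod_cast hkHlt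
        have h := lam_step hx hxy hy
        have hdiff : (k:ℝ) / H - ((k:ℝ) - 1) / H = 1 / H := by
          field_simp
          ring
        rw [hdiff] at h
        calc Real.log (1 - (k:ℝ) / H)
            = (H:ℝ) * (1 / H * Real.log (1 - (k:ℝ) / H)) := by field_simp
          _ ≤ (H:ℝ) * (Lam (((k:ℝ) - 1) / H) - Lam ((k:ℝ) / H)) :=
              mul_le_mul_of_nonneg_left h hHpos.le
      have : ((k:ℝ) + 1) - 1 = (k:ℝ) := by ring
      push_cast
      rw [this]
      nlinarith [IH, hstep]

private lemma binom_le_poisson (H n : ℕ) (q : ℝ) (hq0 : 0 < q) (hq1 : q < 1) (hn : n ≤ H) :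
    (H.choose n : ℝ) * q ^ n * (1 - q) ^ (H - n) * (1 - q)
      ≤ Real.exp (-((H:ℝ) * q)) * ((H:ℝ) * q) ^ n / (n.factorial : ℝ) := by
  have h1q : (0:ℝ) < 1 - q := by linarith
  have key : (H.descFactorial n : ℝ) * q ^ n * (1 - q) ^ (H - n) * (1 - q)
      ≤ Real.exp (-((H:ℝ) * q)) * ((H:ℝ) * q) ^ n := by
    rcases Nat.eq_zero_or_pos n with hn0 | hn1
    · subst hn0
      simp only [Nat.descFactorial_zero, Nat.cast_one, pow_zero, Nat.sub_zero, one_mul, mul_one]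
      have hexp : (1 - q) ^ H ≤ Real.exp (-((H:ℝ) * q)) := by
        have h2 : 1 - q ≤ Real.exp (-q) := by
          have := Real.add_one_le_exp (-q); linarith
        calc (1 - q) ^ H ≤ (Real.exp (-q)) ^ H := pow_le_pow_left₀ h1q.le h2 H
          _ = Real.exp (-((H:ℝ) * q)) := by
            rw [← Real.exp_nat_mul]; ring_nf
      nlinarith [pow_nonneg h1q.le H, hexp]
    · -- 1 ≤ n ≤ H
      have hH1 : 1 ≤ H := le_trans hn1 hn
      have hHpos : (0:ℝ) < H := by exact_mod_cast hH1
      have hprod : (H.descFactorial n : ℝ) = ∏ i ∈ Finset.range n, ((H:ℝ) - i) := by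
        rw [Nat.descFactorial_eq_prod_range, Nat.cast_prod]
        apply Finset.prod_congr rfl
        intro i hi
        rw [Finset.mem_range] at hi
        have hiH : i ≤ H := le_trans hi.le hn
        rw [Nat.cast_sub hiH]
      have hterm : ∀ i ∈ Finset.range n, (0:ℝ) < (H:ℝ) - i := by
        intro i hi
        rw [Finset.mem_range] at hi
        have : (i:ℝ) < H := by exact_mod_cast lt_of_lt_of_le hi hn
        linarith
      have hprodpos : (0:ℝ) < ∏ i ∈ Finset.range n, ((H:ℝ) - i) :=
        Finset.prod_pos hterm
      have hLpos : (0:ℝ) < (H.descFactorial n : ℝ) * q ^ n * (1 - q) ^ (H - n) * (1 - q) := by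
        rw [hprod]; positivity
      -- compare via logs
      rw [← Real.exp_log hLpos, ← Real.exp_log (show (0:ℝ) < Real.exp (-((H:ℝ)*q)) * ((H:ℝ)*q)^n by positivity)]
      apply Real.exp_le_exp.mpr
      have hne : ∀ i ∈ Finset.range n, (H:ℝ) - i ≠ 0 := fun i hi => (hterm i hi).ne'
      have hA : (H.descFactorial n : ℝ) ≠ 0 := by rw [hprod]; exact hprodpos.ne'
      rw [Real.log_mul (mul_ne_zero (mul_ne_zero hA (pow_pos hq0 _).ne') (pow_pos h1q _).ne') h1q.ne',
        Real.log_mul (mul_ne_zero hA (pow_pos hq0 _).ne') (pow_pos h1q _).ne',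
        Real.log_mul hA (pow_pos hq0 _).ne',
        hprod, Real.log_prod hne, Real.log_pow, Real.log_pow,
        Real.log_mul (Real.exp_ne_zero _) (pow_pos (by positivity : (0:ℝ) < (H:ℝ)*q) _).ne',
        Real.log_exp, Real.log_pow, Real.log_mul hHpos.ne' hq0.ne']
      -- rewrite each log (H - i) as log (1 - i/H) + log H
      have hsum : ∑ i ∈ Finset.range n, Real.log ((H:ℝ) - i)
          = (∑ i ∈ Finset.range n, Real.log (1 - (i:ℝ)/H)) + n * Real.log H := by
        have hpt : ∀ i ∈ Finset.range n,
            Real.log ((H:ℝ) - i) = Real.log (1 - (i:ℝ)/H) + Real.log H := by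
          intro i hi
          have hpos := hterm i hi
          have h1 : (0:ℝ) < 1 - (i:ℝ)/H := by
            have : (i:ℝ)/H < 1 := by rw [div_lt_one hHpos]; linarith
            linarith
          rw [← Real.log_mul h1.ne' hHpos.ne']
          congr 1
          field_simp
        rw [Finset.sum_congr rfl hpt, Finset.sum_add_distrib, Finset.sum_const,
          Finset.card_range, nsmul_eq_mul]
      rw [hsum]
      -- main analytic inequality
      have hnH : (n:ℝ) ≤ H := by exact_mod_cast hn
      have hcast : ((H - n : ℕ) : ℝ) = (H:ℝ) - n := by
        rw [Nat.cast_sub hn]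
      rw [hcast]
      set t : ℝ := ((n:ℝ) - 1) / H with ht
      have hsumlog := sum_log_le H hH1 n hn1 hn
      have ht0 : 0 ≤ t := by
        apply div_nonneg _ hHpos.le
        have : (1:ℝ) ≤ n := by exact_mod_cast hn1
        linarith
      have ht1 : t < 1 := by
        rw [ht, div_lt_one hHpos]; linarith
      have hg := g_ineq ht0 ht1 hq0 hq1
      have hgH : (H:ℝ) * q + ((H:ℝ) - n + 1) * Real.log (1 - q) ≤ (H:ℝ) * Lam t := by
        have := mul_le_mul_of_nonneg_left hg hHpos.le
        have hHt : (H:ℝ) * (1 - t) = (H:ℝ) - n + 1 := by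
          rw [ht]; field_simp; ring
        have h2 : (H:ℝ) * (1 - t) * Real.log (1 - q) = ((H:ℝ) - n + 1) * Real.log (1 - q) := by
          rw [hHt]
        nlinarith [this, h2]
      have hlogq : Real.log (1 - q) ≤ 0 := Real.log_nonpos (by linarith) (by linarith)
      nlinarith [hsumlog, hgH]
  -- divide by n!
  have hfact : (0:ℝ) < (n.factorial : ℝ) := by exact_mod_cast n.factorial_pos
  have hchoose : (H.choose n : ℝ) = (H.descFactorial n : ℝ) / (n.factorial : ℝ) := by
    rw [Nat.descFactorial_eq_factorial_mul_choose]
    push_cast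
    field_simp
  rw [hchoose]
  rw [div_mul_eq_mul_div, div_mul_eq_mul_div, div_mul_eq_mul_div]
  gcongr

/-- If `(1-α) m N ≤ H ≤ (1+α) m N`, then the Binomial(H, 1/N) probability mass function
at `n` is at most `e^{αm} (1+α)^n p_m(n) + 9/N`, where `p_m` is the Poisson(m) pmf. -/
theorem binom_pmf_le_poisson_pmf (m : ℝ) (hm : 0 < m) (α : ℝ)
    (hα : α ∈ Set.Ioo (0 : ℝ) (1/2)) (N : ℕ) (hN : 1 ≤ N) (H : ℕ)
    (hH1 : (1 - α) * m * N ≤ (H : ℝ)) (hH2 : (H : ℝ) ≤ (1 + α) * m * N) (n : ℕ) :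
    (H.choose n : ℝ) * (1 / N) ^ n * (1 - 1 / N) ^ (H - n)
      ≤ Real.exp (α * m) * (1 + α) ^ n * (Real.exp (-m) * m ^ n / (Nat.factorial n : ℝ))
        + 9 / N := by
  obtain ⟨hα0, hα1⟩ := hα
  have hNpos : (0:ℝ) < N := by exact_mod_cast hN
  have hfactpos : (0:ℝ) < (Nat.factorial n : ℝ) := by exact_mod_cast n.factorial_pos
  have hRHS1 : 0 ≤ Real.exp (α * m) * (1 + α) ^ n *
      (Real.exp (-m) * m ^ n / (Nat.factorial n : ℝ)) := by positivity
  rcases lt_or_ge H n with hn | hn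
  · rw [Nat.choose_eq_zero_of_lt hn]
    push_cast
    have : (0:ℝ) ≤ 9 / N := by positivity
    simpa using by linarith
  rcases eq_or_lt_of_le hN with hN1 | hN2
  · -- N = 1
    rw [← hN1]
    push_cast
    norm_num
    rcases eq_or_lt_of_le hn with hnH | hnH
    · subst hnH
      simp [Nat.choose_self]
      linarith
    · rw [zero_pow (by omega : H - n ≠ 0)]
      simpa using by linarith
  · -- N ≥ 2
    have hN2' : (2:ℝ) ≤ N := by exact_mod_cast hN2
    set q : ℝ := 1 / N with hqdef
    have hq0 : 0 < q := by positivity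
    have hq1 : q < 1 := by rw [hqdef, div_lt_one hNpos]; linarith
    have h1q : (0:ℝ) < 1 - q := by linarith
    have hqhalf : q ≤ 1/2 := by
      rw [hqdef, div_le_div_iff₀ hNpos (by norm_num)]; linarith
    have key := binom_le_poisson H n q hq0 hq1 hn
    set P : ℝ := Real.exp (-((H:ℝ) * q)) * ((H:ℝ) * q) ^ n / (Nat.factorial n : ℝ) with hP
    have hPnonneg : 0 ≤ P := by positivity
    have hLHS : (H.choose n : ℝ) * q ^ n * (1 - q) ^ (H - n) ≤ P / (1 - q) := by
      rw [le_div_iff₀ h1q]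
      exact key
    have hdiv : P / (1 - q) = P + P * (q / (1 - q)) := by
      field_simp
      ring
    -- bounds on H*q
    have hHq1 : (1 - α) * m ≤ (H:ℝ) * q := by
      rw [hqdef]
      rw [mul_one_div, le_div_iff₀ hNpos]
      exact hH1
    have hHq2 : (H:ℝ) * q ≤ (1 + α) * m := by
      rw [hqdef, mul_one_div, div_le_iff₀ hNpos]
      exact hH2
    have hP1 : P ≤ Real.exp (α * m) * (1 + α) ^ n *
        (Real.exp (-m) * m ^ n / (Nat.factorial n : ℝ)) := by
      have e1 : Real.exp (-((H:ℝ) * q)) ≤ Real.exp (α * m - m) := by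
        apply Real.exp_le_exp.mpr; linarith
      have e2 : ((H:ℝ) * q) ^ n ≤ ((1 + α) * m) ^ n := by
        apply pow_le_pow_left₀ (by positivity) hHq2
      calc P ≤ Real.exp (α * m - m) * ((1 + α) * m) ^ n / (Nat.factorial n : ℝ) := by
            rw [hP]
            gcongr
        _ = Real.exp (α * m) * (1 + α) ^ n *
            (Real.exp (-m) * m ^ n / (Nat.factorial n : ℝ)) := by
            rw [Real.exp_sub, mul_pow, Real.exp_neg]
            field_simp
    have hP2 : P ≤ 1 := by
      have hx : (0:ℝ) ≤ (H:ℝ) * q := by positivity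
      have hterm : ((H:ℝ) * q) ^ n / (Nat.factorial n : ℝ) ≤ Real.exp ((H:ℝ) * q) := by
        have hsum := Real.sum_le_exp_of_nonneg hx (n + 1)
        have hsingle : ((H:ℝ) * q) ^ n / (Nat.factorial n : ℝ)
            ≤ ∑ i ∈ Finset.range (n + 1), ((H:ℝ) * q) ^ i / (Nat.factorial i : ℝ) := by
          apply Finset.single_le_sum (f := fun i => ((H:ℝ) * q) ^ i / (Nat.factorial i : ℝ))
          · intro i _; positivity
          · exact Finset.self_mem_range_succ n
        exact hsingle.trans hsum
      calc P = Real.exp (-((H:ℝ) * q)) * (((H:ℝ) * q) ^ n / (Nat.factorial n : ℝ)) := by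
            rw [hP]; ring
        _ ≤ Real.exp (-((H:ℝ) * q)) * Real.exp ((H:ℝ) * q) := by
            gcongr
        _ = 1 := by rw [← Real.exp_add]; simp
    have htail : P * (q / (1 - q)) ≤ 9 / N := by
      have h1 : q / (1 - q) ≤ 2 * q := by
        rw [div_le_iff₀ h1q]
        nlinarith
      have h2 : P * (q / (1 - q)) ≤ 1 * (2 * q) := by
        apply mul_le_mul hP2 h1 (by positivity) (by norm_num)
      have h3 : (2:ℝ) * q ≤ 9 / N := by
        rw [hqdef, mul_one_div, div_le_div_iff₀ hNpos hNpos]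
        nlinarith
      linarith
    calc (H.choose n : ℝ) * q ^ n * (1 - q) ^ (H - n) ≤ P / (1 - q) := hLHS
      _ = P + P * (q / (1 - q)) := hdiv
      _ ≤ _ + 9 / N := add_le_add hP1 htail
end

section
/- Let m > 0 and let L be a finite nonempty index set. There exists a constant C > 0, depending only on m and |L|, such that for every α ∈ (0, 1/2), every integer N ≥ 1, every family of integers (H_z)_{z ∈ L} with (1−α) m N < H_z < (1+α) m N for all z ∈ L, and every (n_z)_{z ∈ L} ∈ ℕ^{L}, the following holds: if (S_z)_{z ∈ L} is a family of independent random variables with S_z having the Binomial(H_z, 1/N) distribution, then P[ S_z = n_z for all z ∈ L ] ≤ e^{α m |L|} (1+α)^{Σ_{z ∈ L} n_z} Π_{z ∈ L} p_m(n_z) + C/N, where p_m(n) = e^{−m} m^n / n! is the Poisson(m) probability mass function. -/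
open MeasureTheory ProbabilityTheory


open MeasureTheory ProbabilityTheory

lemma aux_pow_div_factorial_le_exp {x : ℝ} (hx : 0 ≤ x) (k : ℕ) :
    x ^ k / (Nat.factorial k : ℝ) ≤ Real.exp x := by
  refine le_trans ?_ (Real.sum_le_exp_of_nonneg hx (k + 1))
  have := Finset.single_le_sum (f := fun i => x ^ i / (Nat.factorial i : ℝ))
    (fun i _ => by positivity) (Finset.self_mem_range_succ k)
  simpa using this

lemma aux_mul_pow_div_factorial_le {x : ℝ} (hx : 0 ≤ x) (k : ℕ) :
    (k : ℝ) * x ^ k / (Nat.factorial k : ℝ) ≤ x * Real.exp x := by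
  cases k with
  | zero => simp; positivity
  | succ j =>
    have h : ((j + 1 : ℕ) : ℝ) * x ^ (j + 1) / (Nat.factorial (j + 1) : ℝ)
        = x * (x ^ j / (Nat.factorial j : ℝ)) := by
      rw [Nat.factorial_succ]
      push_cast
      have hj : (Nat.factorial j : ℝ) ≠ 0 := by positivity
      field_simp
      ring
    rw [h]
    exact mul_le_mul_of_nonneg_left (aux_pow_div_factorial_le_exp hx j) hx

lemma aux_exp_sub_one_le {x : ℝ} (hx : 0 ≤ x) : Real.exp x - 1 ≤ x * Real.exp x := by
  have h := Real.add_one_le_exp (-x)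
  have h2 : Real.exp (-x) * Real.exp x = 1 := by
    rw [← Real.exp_add]; simp
  nlinarith [Real.exp_pos x]

lemma aux_factor_bound (m α : ℝ) (hm : 0 < m) (hα : 0 < α)
    (N H n : ℕ) (hN : 2 ≤ N) (hn : n ≤ H)
    (h1 : (1 - α) * m * N < H) (h2 : (H : ℝ) < (1 + α) * m * N) :
    (H.choose n : ℝ) * (1 / N) ^ n * (1 - 1 / N) ^ (H - n)
      ≤ Real.exp (α * m) * (1 + α) ^ n * (Real.exp (-m) * m ^ n / (Nat.factorial n : ℝ))
          * ((N : ℝ) / ((N : ℝ) - 1)) ^ n := by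
  have hN2 : (2 : ℝ) ≤ (N : ℝ) := by exact_mod_cast hN
  have hNpos : (0 : ℝ) < N := by linarith
  have hN1 : (0 : ℝ) < (N : ℝ) - 1 := by linarith
  have hq : (0 : ℝ) ≤ 1 - 1 / N := by
    have : 1 / (N : ℝ) ≤ 1 := by rw [div_le_one hNpos]; linarith
    linarith
  have hid : (1 / (N : ℝ)) ^ n * (1 - 1 / N) ^ (H - n)
      = (1 / ((N : ℝ) - 1)) ^ n * (1 - 1 / N) ^ H := by
    have hH : H = (H - n) + n := by omega
    rw [show (1 - 1 / (N : ℝ)) ^ H = (1 - 1 / (N:ℝ)) ^ ((H - n) + n) by rw [← hH]]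
    rw [pow_add]
    have h1q : (1 : ℝ) - 1 / N = ((N : ℝ) - 1) / N := by field_simp
    rw [h1q]
    have key : (1/(N:ℝ))^n = (1/((N:ℝ)-1))^n * (((N:ℝ)-1)/N)^n := by
      rw [← mul_pow]; congr 1; field_simp [hN1.ne']
    rw [key]; ring
  have hch : (H.choose n : ℝ) ≤ (H : ℝ) ^ n / (Nat.factorial n : ℝ) := by
    have := Nat.choose_le_pow_div (α := ℝ) n H
    simpa using this
  have hexp : (1 - 1 / (N : ℝ)) ^ H ≤ Real.exp (α * m) * Real.exp (-m) := by
    have e1 : (1 : ℝ) - 1 / N ≤ Real.exp (-(1 / N)) := by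
      have := Real.add_one_le_exp (-(1 / (N : ℝ)))
      linarith
    have e2 : (1 - 1 / (N : ℝ)) ^ H ≤ Real.exp (-(1 / N)) ^ H :=
      pow_le_pow_left₀ hq e1 H
    have e3 : Real.exp (-(1 / (N : ℝ))) ^ H = Real.exp (-((H : ℝ) / N)) := by
      rw [← Real.exp_nat_mul]
      congr 1; field_simp
    have e4 : Real.exp (-((H : ℝ) / N)) ≤ Real.exp (α * m - m) := by
      apply Real.exp_le_exp.2
      have : (1 - α) * m ≤ (H : ℝ) / N := by
        rw [le_div_iff₀ hNpos]; nlinarith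
      nlinarith
    calc (1 - 1 / (N : ℝ)) ^ H ≤ Real.exp (-((H : ℝ) / N)) := e3 ▸ e2
      _ ≤ Real.exp (α * m - m) := e4
      _ = Real.exp (α * m) * Real.exp (-m) := by rw [← Real.exp_add]; ring_nf
  have hfac : (0 : ℝ) < (Nat.factorial n : ℝ) := by positivity
  calc (H.choose n : ℝ) * (1 / N) ^ n * (1 - 1 / N) ^ (H - n)
      = (H.choose n : ℝ) * ((1 / ((N : ℝ) - 1)) ^ n * (1 - 1 / N) ^ H) := by
        rw [mul_assoc, hid]
    _ ≤ ((H : ℝ) ^ n / (Nat.factorial n : ℝ))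
          * ((1 / ((N : ℝ) - 1)) ^ n * (Real.exp (α * m) * Real.exp (-m))) := by
        gcongr
    _ = ((H : ℝ) / ((N : ℝ) - 1)) ^ n / (Nat.factorial n : ℝ)
          * (Real.exp (α * m) * Real.exp (-m)) := by
        simp only [div_pow, one_pow]
        ring
    _ ≤ ((1 + α) * m * ((N : ℝ) / ((N : ℝ) - 1))) ^ n / (Nat.factorial n : ℝ)
          * (Real.exp (α * m) * Real.exp (-m)) := by
        have hbase : (H : ℝ) / ((N : ℝ) - 1) ≤ (1 + α) * m * ((N : ℝ) / ((N : ℝ) - 1)) := by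
          rw [div_le_iff₀ hN1]
          have he : (1 + α) * m * ((N : ℝ) / ((N : ℝ) - 1)) * ((N : ℝ) - 1)
              = (1 + α) * m * N := by field_simp
          rw [he]; exact h2.le
        gcongr
    _ = Real.exp (α * m) * (1 + α) ^ n * (Real.exp (-m) * m ^ n / (Nat.factorial n : ℝ))
          * ((N : ℝ) / ((N : ℝ) - 1)) ^ n := by
        rw [mul_pow, mul_pow]
        field_simp

lemma aux_sum_prod_le {L : Type} [Fintype L] (μ' : ℝ) (hμ : 0 ≤ μ') (n : L → ℕ) :
    (∑ z, (n z : ℝ)) * ∏ z, μ' ^ (n z) / (Nat.factorial (n z) : ℝ)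
      ≤ (Fintype.card L : ℝ) * (μ' * Real.exp μ' * Real.exp (μ' * (Fintype.card L : ℝ))) := by
  classical
  set f : L → ℝ := fun w => μ' ^ (n w) / (Nat.factorial (n w) : ℝ) with hf
  have hf0 : ∀ w, 0 ≤ f w := fun w => by positivity
  have hfe : ∀ w, f w ≤ Real.exp μ' := fun w => aux_pow_div_factorial_le_exp hμ (n w)
  rw [Finset.sum_mul]
  have hterm : ∀ z : L, (n z : ℝ) * ∏ w, f w
      ≤ μ' * Real.exp μ' * Real.exp (μ' * (Fintype.card L : ℝ)) := by
    intro z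
    rw [← Finset.mul_prod_erase Finset.univ f (Finset.mem_univ z), ← mul_assoc]
    have hA : (n z : ℝ) * f z ≤ μ' * Real.exp μ' := by
      have := aux_mul_pow_div_factorial_le hμ (n z)
      calc (n z : ℝ) * f z = (n z : ℝ) * μ' ^ (n z) / (Nat.factorial (n z) : ℝ) := by
            rw [hf]; ring
        _ ≤ μ' * Real.exp μ' := this
    have hB : ∏ w ∈ Finset.univ.erase z, f w ≤ Real.exp (μ' * (Fintype.card L : ℝ)) := by
      calc ∏ w ∈ Finset.univ.erase z, f w
          ≤ ∏ _w ∈ Finset.univ.erase z, Real.exp μ' :=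
            Finset.prod_le_prod (fun w _ => hf0 w) (fun w _ => hfe w)
        _ = Real.exp μ' ^ (Finset.univ.erase z).card := Finset.prod_const _
        _ ≤ Real.exp μ' ^ (Fintype.card L) := by
            apply pow_le_pow_right₀ (Real.one_le_exp hμ)
            calc (Finset.univ.erase z).card ≤ Finset.univ.card :=
                  Finset.card_le_card (Finset.erase_subset _ _)
              _ = Fintype.card L := Finset.card_univ
        _ = Real.exp (μ' * (Fintype.card L : ℝ)) := by
            rw [← Real.exp_nat_mul]; congr 1; ring
    exact mul_le_mul hA hB (Finset.prod_nonneg fun w _ => hf0 w)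
      (by positivity)
  calc ∑ z, (n z : ℝ) * ∏ w, f w
      ≤ ∑ _z : L, μ' * Real.exp μ' * Real.exp (μ' * (Fintype.card L : ℝ)) :=
        Finset.sum_le_sum (fun z _ => hterm z)
    _ = (Fintype.card L : ℝ) * (μ' * Real.exp μ' * Real.exp (μ' * (Fintype.card L : ℝ))) := by
        rw [Finset.sum_const, nsmul_eq_mul, Finset.card_univ]

lemma aux_main_mul_sum_le {L : Type} [Fintype L] (m α : ℝ) (hm : 0 < m)
    (hα : 0 < α) (hα2 : α < 1/2) (n : L → ℕ) :
    Real.exp (α * m * (Fintype.card L : ℝ)) * (1 + α) ^ (∑ z, n z)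
        * (∏ z, Real.exp (-m) * m ^ (n z) / (Nat.factorial (n z) : ℝ))
        * ((∑ z, n z : ℕ) : ℝ)
      ≤ Real.exp (m * (Fintype.card L : ℝ))
          * ((Fintype.card L : ℝ) * (3 * m / 2 * Real.exp (3 * m / 2)
              * Real.exp (3 * m / 2 * (Fintype.card L : ℝ)))) := by
  classical
  set μ' : ℝ := 3 * m / 2 with hμ'
  have hμ0 : 0 ≤ μ' := by positivity
  have hcard0 : (0 : ℝ) ≤ (Fintype.card L : ℝ) := Nat.cast_nonneg _
  have h1α : (0:ℝ) ≤ 1 + α := by linarith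
  have hstep1 : (1 + α) ^ (∑ z, n z)
        * (∏ z, Real.exp (-m) * m ^ (n z) / (Nat.factorial (n z) : ℝ))
      ≤ ∏ z, μ' ^ (n z) / (Nat.factorial (n z) : ℝ) := by
    rw [← Finset.prod_pow_eq_pow_sum, ← Finset.prod_mul_distrib]
    apply Finset.prod_le_prod
    · intro z _; positivity
    · intro z _
      have hem : Real.exp (-m) ≤ 1 := Real.exp_le_one_iff.2 (by linarith)
      have hpow : ((1 + α) * m) ^ (n z) ≤ μ' ^ (n z) := by
        apply pow_le_pow_left₀ (by positivity)
        rw [hμ']; nlinarith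
      calc (1 + α) ^ (n z) * (Real.exp (-m) * m ^ (n z) / (Nat.factorial (n z) : ℝ))
          = Real.exp (-m) * (((1 + α) * m) ^ (n z) / (Nat.factorial (n z) : ℝ)) := by
            rw [mul_pow]; ring
        _ ≤ 1 * (μ' ^ (n z) / (Nat.factorial (n z) : ℝ)) := by
            apply mul_le_mul hem _ (by positivity) (by norm_num)
            apply div_le_div_of_nonneg_right hpow (by positivity) |>.trans_eq rfl
        _ = μ' ^ (n z) / (Nat.factorial (n z) : ℝ) := one_mul _
  have hexp : Real.exp (α * m * (Fintype.card L : ℝ))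
      ≤ Real.exp (m * (Fintype.card L : ℝ)) := by
    apply Real.exp_le_exp.2
    nlinarith [mul_nonneg (mul_nonneg (by linarith : (0:ℝ) ≤ 1 - α) hm.le) hcard0]
  have hsum := aux_sum_prod_le μ' hμ0 n
  have hcast : ((∑ z, n z : ℕ) : ℝ) = ∑ z, (n z : ℝ) := by push_cast; rfl
  calc Real.exp (α * m * (Fintype.card L : ℝ)) * (1 + α) ^ (∑ z, n z)
        * (∏ z, Real.exp (-m) * m ^ (n z) / (Nat.factorial (n z) : ℝ))
        * ((∑ z, n z : ℕ) : ℝ)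
      = Real.exp (α * m * (Fintype.card L : ℝ))
          * (((1 + α) ^ (∑ z, n z)
              * ∏ z, Real.exp (-m) * m ^ (n z) / (Nat.factorial (n z) : ℝ))
            * ((∑ z, n z : ℕ) : ℝ)) := by ring
    _ ≤ Real.exp (m * (Fintype.card L : ℝ))
          * ((∏ z, μ' ^ (n z) / (Nat.factorial (n z) : ℝ)) * ∑ z, (n z : ℝ)) := by
        apply mul_le_mul hexp _ _ (Real.exp_pos _).le
        · rw [hcast]
          apply mul_le_mul_of_nonneg_right hstep1 (by positivity)
        · apply mul_nonneg (mul_nonneg (pow_nonneg h1α _)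
            (Finset.prod_nonneg fun z _ => by positivity)) (by positivity)
    _ ≤ Real.exp (m * (Fintype.card L : ℝ))
          * ((Fintype.card L : ℝ) * (μ' * Real.exp μ' * Real.exp (μ' * (Fintype.card L : ℝ)))) := by
        apply mul_le_mul_of_nonneg_left _ (Real.exp_pos _).le
        rw [mul_comm]
        exact hsum
    _ = Real.exp (m * (Fintype.card L : ℝ))
          * ((Fintype.card L : ℝ) * (3 * m / 2 * Real.exp (3 * m / 2)
              * Real.exp (3 * m / 2 * (Fintype.card L : ℝ)))) := by rw [hμ']

/-- For independent random variables `S_z ∼ Binomial(H_z, 1/N)` over a finite index set,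
with `(1-α) m N < H_z < (1+α) m N` for every `z`, the probability that `S_z = n_z` for
all `z` is at most `e^{α m |L|} (1+α)^{Σ n_z} Π p_m(n_z) + C/N`, where `p_m` is the
Poisson(m) pmf and `C` depends only on `m` and `|L|`. -/
theorem binom_family_pmf_le_poisson {L : Type} [Fintype L] [Nonempty L]
    (m : ℝ) (hm : 0 < m) :
    ∃ C : ℝ, 0 < C ∧
      ∀ α ∈ Set.Ioo (0 : ℝ) (1/2), ∀ N : ℕ, 1 ≤ N →
        ∀ H : L → ℕ, (∀ z, (1 - α) * m * N < (H z : ℝ) ∧ (H z : ℝ) < (1 + α) * m * N) →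
          ∀ n : L → ℕ,
            ∀ (Ω : Type) (_ : MeasurableSpace Ω) (P : Measure Ω), IsProbabilityMeasure P →
              ∀ S : L → Ω → ℕ, (∀ z, Measurable (S z)) →
                iIndepFun S P →
                (∀ z k, P {ω | S z ω = k}
                  = ENNReal.ofReal (((H z).choose k : ℝ) * (1 / (N : ℝ)) ^ k
                      * (1 - 1 / (N : ℝ)) ^ (H z - k))) →
                (P {ω | ∀ z, S z ω = n z}).toReal
                  ≤ Real.exp (α * m * (Fintype.card L : ℝ))
                      * (1 + α) ^ (∑ z, n z)
                      * (∏ z, Real.exp (-m) * m ^ (n z) / (Nat.factorial (n z) : ℝ))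
                    + C / N := by
  classical
  set cardL : ℝ := (Fintype.card L : ℝ) with hcardL
  have hcard0 : (0:ℝ) ≤ cardL := Nat.cast_nonneg _
  set K : ℝ := Real.exp (m * cardL) * (cardL * (3 * m / 2 * Real.exp (3 * m / 2)
      * Real.exp (3 * m / 2 * cardL))) with hK
  have hK0 : 0 ≤ K := by positivity
  set E4 : ℝ := Real.exp (4 * m * cardL) with hE4
  have hE40 : 0 < E4 := Real.exp_pos _
  set C : ℝ := 1 + 2 * K * E4 with hC
  have hC1 : (1:ℝ) ≤ C := by nlinarith
  refine ⟨C, by linarith, ?_⟩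
  intro α hα N hN H hH n Ω mΩ P hP S hS hind hpmf
  obtain ⟨hα0, hα2⟩ := hα
  have h1α : (0:ℝ) ≤ 1 + α := by linarith
  have hmain0 : 0 ≤ Real.exp (α * m * cardL) * (1 + α) ^ (∑ z, n z)
      * (∏ z, Real.exp (-m) * m ^ (n z) / (Nat.factorial (n z) : ℝ)) :=
    mul_nonneg (mul_nonneg (Real.exp_pos _).le (pow_nonneg h1α _))
      (Finset.prod_nonneg fun z _ => by positivity)
  have hNr1 : (1:ℝ) ≤ (N:ℝ) := by exact_mod_cast hN
  rcases eq_or_lt_of_le hN with h1 | hN2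
  · -- N = 1
    have hle : (P {ω | ∀ z, S z ω = n z}).toReal ≤ 1 := by
      calc (P {ω | ∀ z, S z ω = n z}).toReal ≤ (1 : ENNReal).toReal :=
            ENNReal.toReal_mono ENNReal.one_ne_top prob_le_one
        _ = 1 := by simp
    have hCN : C / (N:ℝ) = C := by rw [← h1]; simp
    rw [hCN]
    linarith
  · -- N ≥ 2
    have hN2' : 2 ≤ N := hN2
    have hNr2 : (2:ℝ) ≤ (N:ℝ) := by exact_mod_cast hN2'
    have hN1 : (0:ℝ) < (N:ℝ) - 1 := by linarith
    have hNpos : (0:ℝ) < (N:ℝ) := by linarith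
    by_cases hall : ∀ z, n z ≤ H z
    · -- all n z ≤ H z : main case
      set b : L → ℝ := fun z => ((H z).choose (n z) : ℝ) * (1/(N:ℝ))^(n z)
          * (1 - 1/(N:ℝ))^(H z - n z) with hb
      have hq0 : (0:ℝ) ≤ 1 - 1/(N:ℝ) := by
        have : 1/(N:ℝ) ≤ 1 := by rw [div_le_one hNpos]; linarith
        linarith
      have hb0 : ∀ z, 0 ≤ b z := fun z => by
        rw [hb]; positivity
      have hset : {ω | ∀ z, S z ω = n z} = ⋂ z, S z ⁻¹' {n z} := by
        ext ω; simp
      have hprod : P {ω | ∀ z, S z ω = n z} = ∏ z, P (S z ⁻¹' {n z}) := by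
        rw [hset]
        exact hind.meas_iInter (fun z => ⟨{n z}, measurableSet_singleton _, rfl⟩)
      have hpre : ∀ z : L, S z ⁻¹' {n z} = {ω | S z ω = n z} := fun z => rfl
      have hLHS : (P {ω | ∀ z, S z ω = n z}).toReal = ∏ z, b z := by
        rw [hprod, ENNReal.toReal_prod]
        refine Finset.prod_congr rfl (fun z _ => ?_)
        rw [hpre z, hpmf z (n z), ENNReal.toReal_ofReal (hb0 z)]
      rw [hLHS]
      set r : ℝ := (N:ℝ) / ((N:ℝ) - 1) with hr
      have hr0 : 0 ≤ r := by positivity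
      set T : ℕ := ∑ z, n z with hT
      set Tr : ℝ := (T : ℝ) with hTr
      have hTr0 : 0 ≤ Tr := Nat.cast_nonneg _
      set x : ℝ := Tr / ((N:ℝ) - 1) with hx
      have hx0 : 0 ≤ x := by positivity
      set main : ℝ := Real.exp (α * m * cardL) * (1 + α) ^ T
          * (∏ z, Real.exp (-m) * m ^ (n z) / (Nat.factorial (n z) : ℝ)) with hmain
      -- step 1 : ∏ b ≤ main * r ^ T
      have step1 : ∏ z, b z ≤ main * r ^ T := by
        calc ∏ z, b z
            ≤ ∏ z, (Real.exp (α*m) * (1+α)^(n z)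
                * (Real.exp (-m) * m^(n z) / (Nat.factorial (n z) : ℝ)) * r^(n z)) := by
              refine Finset.prod_le_prod (fun z _ => hb0 z) (fun z _ => ?_)
              exact aux_factor_bound m α hm hα0 N (H z) (n z) hN2' (hall z)
                (hH z).1 (hH z).2
          _ = main * r ^ T := by
              have hexp_card : Real.exp (α*m) ^ Fintype.card L
                  = Real.exp (α * m * cardL) := by
                rw [← Real.exp_nat_mul, hcardL]; congr 1; ring
              rw [Finset.prod_mul_distrib, Finset.prod_mul_distrib,
                Finset.prod_mul_distrib, Finset.prod_const,
                Finset.prod_pow_eq_pow_sum, Finset.prod_pow_eq_pow_sum,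
                Finset.card_univ, hexp_card, hmain, hT]
      -- step 2 : r ^ T ≤ exp x
      have step2 : r ^ T ≤ Real.exp x := by
        have hre : r ≤ Real.exp (1/((N:ℝ)-1)) := by
          have h := Real.add_one_le_exp (1/((N:ℝ)-1))
          have hreq : r = 1/((N:ℝ)-1) + 1 := by rw [hr]; field_simp; ring
          linarith
        calc r ^ T ≤ Real.exp (1/((N:ℝ)-1)) ^ T := pow_le_pow_left₀ hr0 hre T
          _ = Real.exp ((T:ℝ) * (1/((N:ℝ)-1))) := (Real.exp_nat_mul _ T).symm
          _ = Real.exp x := by rw [hx, hTr]; congr 1; ring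
      -- bound on x
      have hTle : Tr ≤ 2 * m * cardL * (N:ℝ) := by
        have h1 : Tr = ∑ z, ((n z : ℕ) : ℝ) := by rw [hTr, hT]; push_cast; rfl
        have h2 : ∑ z, ((n z : ℕ) : ℝ) ≤ ∑ z, ((H z : ℕ) : ℝ) :=
          Finset.sum_le_sum (fun z _ => by exact_mod_cast hall z)
        have h3 : ∑ z, ((H z : ℕ) : ℝ) ≤ ∑ _z : L, 2 * m * (N:ℝ) :=
          Finset.sum_le_sum (fun z _ => by nlinarith [(hH z).2])
        have h4 : ∑ _z : L, 2 * m * (N:ℝ) = cardL * (2 * m * (N:ℝ)) := by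
          rw [Finset.sum_const, nsmul_eq_mul, Finset.card_univ, hcardL]
        rw [h1]
        calc ∑ z, ((n z : ℕ) : ℝ) ≤ cardL * (2 * m * (N:ℝ)) := by
              rw [← h4]; exact le_trans h2 h3
          _ = 2 * m * cardL * (N:ℝ) := by ring
      have hx4 : x ≤ 4 * m * cardL := by
        rw [hx, div_le_iff₀ hN1]
        have hNN : (N:ℝ) ≤ 2 * ((N:ℝ) - 1) := by linarith
        have h2m : (0:ℝ) ≤ 2 * m * cardL := by positivity
        calc Tr ≤ 2 * m * cardL * (N:ℝ) := hTle
          _ ≤ 2 * m * cardL * (2 * ((N:ℝ) - 1)) :=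
              mul_le_mul_of_nonneg_left hNN h2m
          _ = 4 * m * cardL * ((N:ℝ) - 1) := by ring
      have hx2 : x ≤ Tr * (2 / (N:ℝ)) := by
        rw [hx, div_le_iff₀ hN1]
        have h5 : (1:ℝ) ≤ (2 / (N:ℝ)) * ((N:ℝ) - 1) := by
          rw [div_mul_eq_mul_div, le_div_iff₀ hNpos]; linarith
        calc Tr = Tr * 1 := (mul_one Tr).symm
          _ ≤ Tr * ((2 / (N:ℝ)) * ((N:ℝ) - 1)) :=
              mul_le_mul_of_nonneg_left h5 hTr0
          _ = Tr * (2 / (N:ℝ)) * ((N:ℝ) - 1) := by ring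
      -- main * Tr ≤ K
      have hmainT : main * Tr ≤ K := by
        have := aux_main_mul_sum_le (L := L) m α hm hα0 hα2 n
        rw [hmain, hTr, hT, hK, hcardL]
        exact this
      -- final assembly
      have hfin : main * r ^ T ≤ main + C / (N:ℝ) := by
        have hmain0' : 0 ≤ main := by rw [hmain, hT]; exact hmain0
        have e1 : main * r ^ T ≤ main * Real.exp x :=
          mul_le_mul_of_nonneg_left step2 hmain0'
        have e2 : Real.exp x - 1 ≤ x * Real.exp x := aux_exp_sub_one_le hx0
        have e3 : main * (x * Real.exp x) ≤ (main * Tr) * ((2/(N:ℝ)) * E4) := by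
          have hex : Real.exp x ≤ E4 := by rw [hE4]; exact Real.exp_le_exp.2 hx4
          calc main * (x * Real.exp x) ≤ main * ((Tr * (2/(N:ℝ))) * E4) := by
                apply mul_le_mul_of_nonneg_left _ hmain0'
                exact mul_le_mul hx2 hex (Real.exp_pos _).le (by positivity)
            _ = (main * Tr) * ((2/(N:ℝ)) * E4) := by ring
        have e4 : (main * Tr) * ((2/(N:ℝ)) * E4) ≤ K * ((2/(N:ℝ)) * E4) :=
          mul_le_mul_of_nonneg_right hmainT (by positivity)
        have e5 : K * ((2/(N:ℝ)) * E4) = 2 * K * E4 / (N:ℝ) := by ring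
        have e6 : 2 * K * E4 / (N:ℝ) ≤ C / (N:ℝ) := by
          apply div_le_div_of_nonneg_right ?_ hNpos.le |>.trans_eq rfl
          linarith
        have emul : main * (Real.exp x - 1) ≤ main * (x * Real.exp x) :=
          mul_le_mul_of_nonneg_left e2 hmain0'
        have eq1 : main * Real.exp x = main + main * (Real.exp x - 1) := by ring
        linarith
      calc ∏ z, b z ≤ main * r ^ T := step1
        _ ≤ main + C / (N:ℝ) := hfin
        _ = Real.exp (α * m * cardL) * (1 + α) ^ (∑ z, n z)
              * (∏ z, Real.exp (-m) * m ^ (n z) / (Nat.factorial (n z) : ℝ))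
            + C / (N:ℝ) := by rw [hmain, hT]
    · -- some n z > H z : probability is zero
      push_neg at hall
      obtain ⟨z0, hz0⟩ := hall
      have hsub : {ω | ∀ z, S z ω = n z} ⊆ {ω | S z0 ω = n z0} := fun ω h => h z0
      have hle := measure_mono (μ := P) hsub
      have hch0 : ((H z0).choose (n z0) : ℝ) = 0 := by
        rw [Nat.choose_eq_zero_of_lt hz0]; simp
      have hle0 : P {ω | S z0 ω = n z0} = 0 := by
        rw [hpmf z0 (n z0), hch0, zero_mul, zero_mul, ENNReal.ofReal_zero]
      have hzero : P {ω | ∀ z, S z ω = n z} = 0 :=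
        le_antisymm (hle0 ▸ hle) zero_le
      rw [hzero]
      simp only [ENNReal.toReal_zero]
      have hcn : 0 ≤ C / (N:ℝ) := by positivity
      linarith
end

section
/- Let L be a finite set equipped with a total order ⪯, and let (U^{w,z}_{i,j})_{i,j ∈ ℕ, w,z ∈ L, w ⪯ z} be a family of independent random variables each uniformly distributed on [0,1]; extend it to all pairs by setting U^{w,z}_{i,j} = U^{z,w}_{j,i} when z ≺ w. Let (g_{w,z})_{w,z ∈ L} be a symmetric matrix with entries in [0,1], and let α ∈ (0, 1/2). For M ∈ ℕ, w ∈ L, V ⊆ L∖{w}, E ⊆ V and 𝐤 = (k_z)_{z ∈ V} ∈ {1, …, ⌈M(1+α)⌉}^{V}, let F^{M}_{w,V,E,𝐤} be the event that both: (i) | { j ∈ {1,…,⌈M(1+α)⌉} : U^{w,z}_{j,k_z} ≤ g_{w,z} for all z ∈ E and U^{w,z}_{j,k_z} > g_{w,z} for all z ∈ V∖E } | ≤ M g^{E}_{V,w} (1+α)², and (ii) | { j ∈ {1,…,⌊M(1−α)⌋} : U^{w,z}_{j,k_z} ≤ g_{w,z} for all z ∈ E and U^{w,z}_{j,k_z}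 > g_{w,z} for all z ∈ V∖E } | ≥ M g^{E}_{V,w} (1−α)², where g^{E}_{V,w} = (Π_{z ∈ E} g_{w,z}) (Π_{z ∈ V∖E} (1 − g_{w,z})). Let F^{M} be the intersection of F^{M}_{w,V,E,𝐤} over all w ∈ L, all V ⊆ L∖{w}, all E ⊆ V, and all 𝐤 ∈ {1,…,⌈M(1+α)⌉}^{V}. Then there exist constants c > 0 and M₀ ≥ 1, depending on L, (g_{w,z}) and α, such that P(F^{M}) ≥ 1 − exp(−cM) for all integers M ≥ M₀. -/
set_option linter.unusedSectionVars false
set_option linter.unusedVariables false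


open MeasureTheory ProbabilityTheory
open Real Filter Topology

/-- Extension of a family of random variables indexed by ordered pairs `(w,z)` with
`w ≤ z` (and a pair of integer indices) to all pairs, by the symmetry rule
`U^{w,z}_{i,j} = U^{z,w}_{j,i}`. -/
noncomputable def Uext {L Ω : Type} [LinearOrder L]
    (U : {p : (L × L) × ℕ × ℕ // p.1.1 ≤ p.1.2} → Ω → ℝ)
    (w z : L) (i j : ℕ) : Ω → ℝ :=
  if h : w ≤ z then U ⟨((w, z), (i, j)), h⟩ else U ⟨((z, w), (j, i)), le_of_not_ge h⟩

section aux

lemma eventually_poly_le_exp (C c : ℝ) (hc : 0 < c) (n : ℕ) :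
    ∃ M₀ : ℕ, 2 ≤ M₀ ∧ ∀ M : ℕ, M₀ ≤ M → C * (M:ℝ)^n * Real.exp (-c * M) ≤ 1 := by
  have h0 : Tendsto (fun x : ℝ => (C/c^n) * (x^n * Real.exp (-x))) atTop (𝓝 0) := by
    have := (tendsto_pow_mul_exp_neg_atTop_nhds_zero n).const_mul (C/c^n)
    simpa using this
  have hcm : Tendsto (fun y : ℝ => c * y) atTop atTop :=
    Tendsto.const_mul_atTop hc tendsto_id
  have h1 : Tendsto (fun y : ℝ => C * y^n * Real.exp (-c * y)) atTop (𝓝 0) := by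
    have h2 := h0.comp hcm
    refine h2.congr fun y => ?_
    simp only [Function.comp_apply]
    rw [mul_pow]
    have hcn : c^n ≠ 0 := (pow_pos hc n).ne'
    field_simp
  have h3 : ∀ᶠ y in (atTop : Filter ℝ), C * y^n * Real.exp (-c * y) ≤ 1 := by
    filter_upwards [h1.eventually (eventually_le_nhds (by norm_num : (0:ℝ) < 1))] with y hy
    exact hy
  have h4 := (tendsto_natCast_atTop_atTop (R := ℝ)).eventually h3
  rw [Filter.eventually_atTop] at h4
  obtain ⟨m, hm⟩ := h4
  exact ⟨max m 2, le_max_right _ _, fun M hM => hm M (le_trans (le_max_left _ _) hM)⟩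


lemma delta_pos {α : ℝ} (h0 : 0 < α) (h1 : α < 1) :
    0 < (1 + α) * Real.log (1 + α) - α := by
  have hlt := Real.add_one_lt_exp (x := -Real.log (1 + α))
    (neg_ne_zero.mpr (ne_of_gt (Real.log_pos (by linarith))))
  rw [Real.exp_neg, Real.exp_log (by linarith)] at hlt
  have h2 : (-Real.log (1+α) + 1) * (1+α) < 1 := by
    have := (mul_lt_mul_of_pos_right hlt (show (0:ℝ) < 1 + α by linarith))
    rwa [inv_mul_cancel₀ (by linarith : (1:ℝ)+α ≠ 0)] at this
  nlinarith

lemma delta'_pos {α : ℝ} (h0 : 0 < α) (h1 : α < 1) :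
    0 < (1 - α) * Real.log (1 - α) + α := by
  have hlog : Real.log (1 - α) < 0 := Real.log_neg (by linarith) (by linarith)
  have hlt := Real.add_one_lt_exp (x := -Real.log (1 - α)) (neg_ne_zero.mpr (ne_of_lt hlog))
  rw [Real.exp_neg, Real.exp_log (by linarith)] at hlt
  have h2 : (-Real.log (1-α) + 1) * (1-α) < 1 := by
    have := (mul_lt_mul_of_pos_right hlt (show (0:ℝ) < 1 - α by linarith))
    rwa [inv_mul_cancel₀ (by linarith : (1:ℝ)-α ≠ 0)] at this
  nlinarith

lemma upper_exponent {α p pmin M N : ℝ} (h0 : 0 < α) (h1 : α < 1)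
    (hpmin : 0 < pmin) (hp : pmin ≤ p) (hp1 : p ≤ 1) (hM : 0 ≤ M)
    (hN : N ≤ M * (1 + α) + 1) (hN0 : 0 ≤ N) :
    -Real.log (1+α) * (M * p * (1+α)^2) + N * (p * ((1+α) - 1))
      ≤ 1 - (pmin * ((1 + α) * Real.log (1 + α) - α)) * M := by
  have hδ := delta_pos h0 h1
  set δ := (1 + α) * Real.log (1 + α) - α with hδdef
  have hp0 : 0 < p := lt_of_lt_of_le hpmin hp
  have h2 : N * (p * ((1+α) - 1)) ≤ (M * (1+α) + 1) * (p * α) := by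
    have h3 : (1+α) - 1 = α := by ring
    rw [h3]
    nlinarith [mul_nonneg (by linarith : 0 ≤ M * (1+α) + 1 - N) (by positivity : 0 ≤ p * α)]
  have hL : -Real.log (1+α) * (M * p * (1+α)^2) = -(δ+α) * (M * p * (1+α)) := by
    rw [hδdef]; ring
  rw [hL]
  have key : -(δ+α) * (M * p * (1+α)) + (M * (1+α) + 1) * (p * α)
      ≤ 1 - (pmin * δ) * M := by
    nlinarith [mul_nonneg (mul_nonneg hM (by nlinarith : 0 ≤ p * (1+α) - pmin)) hδ.le,
      (by nlinarith : p * α ≤ 1)]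
  linarith

lemma lower_exponent {α p pmin M N : ℝ} (h0 : 0 < α) (h1 : α < 1/2)
    (hpmin : 0 < pmin) (hp : pmin ≤ p) (hp1 : p ≤ 1) (hM : 0 ≤ M)
    (hN : M * (1 - α) - 1 ≤ N) (hN0 : 0 ≤ N) :
    -Real.log (1-α) * (M * p * (1-α)^2) + N * (p * ((1-α) - 1))
      ≤ 1 - (pmin * (((1 - α) * Real.log (1 - α) + α)/2)) * M := by
  have hδ := delta'_pos h0 (by linarith)
  set δ := (1 - α) * Real.log (1 - α) + α with hδdef
  have hp0 : 0 < p := lt_of_lt_of_le hpmin hp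
  have h2 : N * (p * ((1-α) - 1)) ≤ (M * (1-α) - 1) * (p * (-α)) := by
    have h3 : (1-α) - 1 = -α := by ring
    rw [h3]
    nlinarith [mul_nonneg (by linarith : 0 ≤ N - (M * (1-α) - 1)) (by positivity : 0 ≤ p * α)]
  have hL : -Real.log (1-α) * (M * p * (1-α)^2) = -(δ-α) * (M * p * (1-α)) := by
    rw [hδdef]; ring
  rw [hL]
  have key : -(δ-α) * (M * p * (1-α)) + (M * (1-α) - 1) * (p * (-α))
      ≤ 1 - (pmin * (δ/2)) * M := by
    nlinarith [mul_nonneg (mul_nonneg hM (by nlinarith : 0 ≤ p * (1-α) - pmin/2)) hδ.le,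
      (by nlinarith : p * α ≤ 1)]
  linarith


variable {Ω : Type} [MeasurableSpace Ω] {P : Measure Ω} [IsProbabilityMeasure P]

lemma exp_mul_indicator (A : Set Ω) (t : ℝ) (ω : Ω) :
    Real.exp (t * A.indicator (fun _ => (1:ℝ)) ω)
      = A.indicator (fun _ => Real.exp t - 1) ω + 1 := by
  by_cases h : ω ∈ A <;> simp [h]

lemma bernoulli_integrable (A : Set Ω) (hA : MeasurableSet A) (t : ℝ) :
    Integrable (fun ω => Real.exp (t * A.indicator (fun _ => (1:ℝ)) ω)) P := by
  simp only [exp_mul_indicator]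
  exact (((integrable_const (Real.exp t - 1)).indicator hA).add (integrable_const 1))

lemma bernoulli_mgf (A : Set Ω) (hA : MeasurableSet A) (t : ℝ) :
    mgf (A.indicator (fun _ => (1:ℝ))) P t = 1 + (P A).toReal * (Real.exp t - 1) := by
  rw [mgf]
  simp only [exp_mul_indicator]
  rw [integral_add ((integrable_const (Real.exp t - 1)).indicator hA) (integrable_const 1)]
  rw [integral_indicator_const _ hA]
  simp [mul_comm, add_comm]
  exact Or.inl rfl

section binom
variable (A : ℕ → Set Ω) (hA : ∀ j, MeasurableSet (A j)) {p : ℝ}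
include hA

lemma binom_mgf (hp0 : 0 ≤ p)
    (hp : ∀ s : Finset ℕ, P (⋂ j ∈ s, A j) = ENNReal.ofReal p ^ s.card)
    (N : ℕ) (t : ℝ) :
    mgf (∑ j ∈ Finset.Icc 1 N, (A j).indicator fun _ => (1:ℝ)) P t
      = (1 + p * (Real.exp t - 1)) ^ N := by
  classical
  have hPA : ∀ j, P (A j) = ENNReal.ofReal p := by
    intro j; have := hp {j}; simpa using this
  have hindepset : iIndepSet A P := by
    rw [iIndepSet_iff_meas_biInter hA]
    intro s
    rw [hp s, Finset.prod_congr rfl (fun j _ => hPA j), Finset.prod_const]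
  have hindep : iIndepFun
      (fun j => (A j).indicator fun _ => (1:ℝ)) P := hindepset.iIndepFun_indicator
  have hmeas : ∀ j, Measurable ((A j).indicator fun _ => (1:ℝ)) :=
    fun j => (measurable_const.indicator (hA j))
  rw [hindep.mgf_sum hmeas]
  rw [Finset.prod_congr rfl (fun j _ => by
    rw [bernoulli_mgf (A j) (hA j) t, hPA j, ENNReal.toReal_ofReal hp0]),
    Finset.prod_const, Nat.card_Icc]
  norm_num

lemma binom_chernoff_core (hp0 : 0 ≤ p) (hp1 : p ≤ 1)
    (hp : ∀ s : Finset ℕ, P (⋂ j ∈ s, A j) = ENNReal.ofReal p ^ s.card)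
    (N : ℕ) (t a : ℝ) :
    Real.exp (-t * a) * (1 + p * (Real.exp t - 1)) ^ N
      ≤ Real.exp (-t * a + N * (p * (Real.exp t - 1))) := by
  rw [Real.exp_add]
  refine mul_le_mul_of_nonneg_left ?_ (Real.exp_pos _).le
  calc (1 + p * (Real.exp t - 1)) ^ N ≤ (Real.exp (p * (Real.exp t - 1))) ^ N := by
        refine pow_le_pow_left₀ ?_ ?_ N
        · nlinarith [Real.exp_pos t]
        · linarith [Real.add_one_le_exp (p * (Real.exp t - 1))]
    _ = Real.exp (N * (p * (Real.exp t - 1))) := by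
        rw [← Real.exp_nat_mul]

lemma binom_upper_tail (hp0 : 0 ≤ p) (hp1 : p ≤ 1)
    (hp : ∀ s : Finset ℕ, P (⋂ j ∈ s, A j) = ENNReal.ofReal p ^ s.card)
    (N : ℕ) {t : ℝ} (a : ℝ) (ht : 0 ≤ t) :
    P {ω | a ≤ (∑ j ∈ Finset.Icc 1 N, (A j).indicator fun _ => (1:ℝ)) ω}
      ≤ ENNReal.ofReal (Real.exp (-t * a + N * (p * (Real.exp t - 1)))) := by
  classical
  have hindepset : iIndepSet A P := by
    rw [iIndepSet_iff_meas_biInter hA]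
    intro s
    rw [hp s, Finset.prod_congr rfl (fun j _ => by have := hp {j}; simpa using this),
      Finset.prod_const]
  have hindep : iIndepFun
      (fun j => (A j).indicator fun _ => (1:ℝ)) P := hindepset.iIndepFun_indicator
  have hmeas : ∀ j, Measurable ((A j).indicator fun _ => (1:ℝ)) :=
    fun j => (measurable_const.indicator (hA j))
  have hint := hindep.integrable_exp_mul_sum (t := t) hmeas
    (fun j (_ : j ∈ Finset.Icc 1 N) => bernoulli_integrable (A j) (hA j) t)
  have h1 := measure_ge_le_exp_mul_mgf (μ := P)
    (X := ∑ j ∈ Finset.Icc 1 N, (A j).indicator fun _ => (1:ℝ)) a ht hint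
  rw [binom_mgf A hA hp0 hp N t] at h1
  have h2 := h1.trans (binom_chernoff_core A hA hp0 hp1 hp N t a)
  calc P _ = ENNReal.ofReal (P {ω | a ≤ (∑ j ∈ Finset.Icc 1 N,
        (A j).indicator fun _ => (1:ℝ)) ω}).toReal := by
        rw [ENNReal.ofReal_toReal (measure_ne_top _ _)]
    _ ≤ _ := ENNReal.ofReal_le_ofReal h2

lemma binom_lower_tail (hp0 : 0 ≤ p) (hp1 : p ≤ 1)
    (hp : ∀ s : Finset ℕ, P (⋂ j ∈ s, A j) = ENNReal.ofReal p ^ s.card)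
    (N : ℕ) {t : ℝ} (b : ℝ) (ht : t ≤ 0) :
    P {ω | (∑ j ∈ Finset.Icc 1 N, (A j).indicator fun _ => (1:ℝ)) ω ≤ b}
      ≤ ENNReal.ofReal (Real.exp (-t * b + N * (p * (Real.exp t - 1)))) := by
  classical
  have hindepset : iIndepSet A P := by
    rw [iIndepSet_iff_meas_biInter hA]
    intro s
    rw [hp s, Finset.prod_congr rfl (fun j _ => by have := hp {j}; simpa using this),
      Finset.prod_const]
  have hindep : iIndepFun
      (fun j => (A j).indicator fun _ => (1:ℝ)) P := hindepset.iIndepFun_indicator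
  have hmeas : ∀ j, Measurable ((A j).indicator fun _ => (1:ℝ)) :=
    fun j => (measurable_const.indicator (hA j))
  have hint := hindep.integrable_exp_mul_sum (t := t) hmeas
    (fun j (_ : j ∈ Finset.Icc 1 N) => bernoulli_integrable (A j) (hA j) t)
  have h1 := measure_le_le_exp_mul_mgf (μ := P)
    (X := ∑ j ∈ Finset.Icc 1 N, (A j).indicator fun _ => (1:ℝ)) b ht hint
  rw [binom_mgf A hA hp0 hp N t] at h1
  have h2 := h1.trans (binom_chernoff_core A hA hp0 hp1 hp N t b)
  calc P _ = ENNReal.ofReal (P {ω | (∑ j ∈ Finset.Icc 1 N,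
        (A j).indicator fun _ => (1:ℝ)) ω ≤ b}).toReal := by
        rw [ENNReal.ofReal_toReal (measure_ne_top _ _)]
    _ ≤ _ := ENNReal.ofReal_le_ofReal h2
end binom


def pairIdx {L : Type} [LinearOrder L] (w z : L) (i j : ℕ) :
    {p : (L × L) × ℕ × ℕ // p.1.1 ≤ p.1.2} :=
  if h : w ≤ z then ⟨((w, z), (i, j)), h⟩ else ⟨((z, w), (j, i)), le_of_not_ge h⟩

lemma Uext_eq_pairIdx {L Ω : Type} [LinearOrder L]
    (U : {p : (L × L) × ℕ × ℕ // p.1.1 ≤ p.1.2} → Ω → ℝ) (w z : L) (i j : ℕ) :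
    Uext U w z i j = U (pairIdx w z i j) := by
  unfold Uext pairIdx; split <;> rfl

lemma pairIdx_inj {L : Type} [LinearOrder L] {w z z' : L} {i j i' j' : ℕ}
    (hz : z ≠ w) (hz' : z' ≠ w)
    (h : pairIdx w z i j = pairIdx w z' i' j') : z = z' ∧ i = i' := by
  unfold pairIdx at h
  split_ifs at h with h1 h2 h2 <;>
    simp only [Subtype.mk.injEq, Prod.mk.injEq] at h
  · exact ⟨h.1.2, h.2.1⟩
  · exact absurd h.1.1.symm hz'
  · exact absurd h.1.1 hz
  · exact ⟨h.1.1, h.2.2⟩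

lemma pairIdx_fst {L : Type} [LinearOrder L] {w z : L} (hz : z ≠ w) (i j : ℕ) :
    (if (pairIdx w z i j).1.1.1 = w then (pairIdx w z i j).1.1.2
      else (pairIdx w z i j).1.1.1) = z := by
  unfold pairIdx; split <;> simp [hz]

section pat
variable {L : Type} [Fintype L] [LinearOrder L]
    {Ω : Type} [MeasurableSpace Ω] (P : Measure Ω) [IsProbabilityMeasure P]
    (U : {p : (L × L) × ℕ × ℕ // p.1.1 ≤ p.1.2} → Ω → ℝ)
    (g : L → L → ℝ) (w : L) (V E : Finset L) (k : L → ℕ)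

/-- The pattern event for row `j`. -/
def patSet (j : ℕ) : Set Ω :=
  {ω | ∀ z ∈ V, (z ∈ E → Uext U w z j (k z) ω ≤ g w z) ∧
      (z ∉ E → g w z < Uext U w z j (k z) ω)}

lemma patSet_eq_iInter (j : ℕ) :
    patSet U g w V E k j = ⋂ z ∈ V, (Uext U w z j (k z)) ⁻¹'
      (if z ∈ E then Set.Iic (g w z) else Set.Ioi (g w z)) := by
  ext ω
  simp only [patSet, Set.mem_setOf_eq, Set.mem_iInter, Set.mem_preimage]
  refine forall₂_congr fun z hz => ?_
  by_cases hzE : z ∈ E <;> simp [hzE]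

lemma Uext_measurable (hU_meas : ∀ i, Measurable (U i)) (z : L) (i j : ℕ) :
    Measurable (Uext U w z i j) := by
  unfold Uext; split <;> apply hU_meas

lemma patSet_measurable (hU_meas : ∀ i, Measurable (U i)) (j : ℕ) :
    MeasurableSet (patSet U g w V E k j) := by
  rw [patSet_eq_iInter]
  refine MeasurableSet.biInter (Set.to_countable _) fun z _ => ?_
  exact (Uext_measurable U w hU_meas z j (k z))
    (by by_cases h : z ∈ E <;>
      simp only [h, if_true, if_false] <;>
      first | exact measurableSet_Iic | exact measurableSet_Ioi)

def zOf {L : Type} [LinearOrder L] (w : L) (i : {p : (L × L) × ℕ × ℕ // p.1.1 ≤ p.1.2}) : L :=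
  if i.1.1.1 = w then i.1.1.2 else i.1.1.1

lemma zOf_pairIdx {L : Type} [LinearOrder L] {w z : L} (hz : z ≠ w) (i j : ℕ) :
    zOf w (pairIdx w z i j) = z := by
  unfold zOf pairIdx; split <;> simp [hz]

lemma patSet_prob (hU_meas : ∀ i, Measurable (U i))
    (hU_indep : iIndepFun U P)
    (hU_unif : ∀ i, Measure.map (U i) P = volume.restrict (Set.Icc (0 : ℝ) 1))
    (hg01 : ∀ w z, g w z ∈ Set.Icc (0 : ℝ) 1)
    (hwV : w ∉ V) (hEV : E ⊆ V) (s : Finset ℕ) :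
    P (⋂ j ∈ s, patSet U g w V E k j)
      = ENNReal.ofReal ((∏ z ∈ E, g w z) * ∏ z ∈ V \ E, (1 - g w z)) ^ s.card := by
  classical
  set BB : L → Set ℝ := fun z => if z ∈ E then Set.Iic (g w z) else Set.Ioi (g w z) with hBB
  have hBBmeas : ∀ z, MeasurableSet (BB z) := by
    intro z; rw [hBB]
    by_cases h : z ∈ E <;> simp only [h, if_true, if_false] <;>
      first | exact measurableSet_Iic | exact measurableSet_Ioi
  set q : L → ℝ := fun z => if z ∈ E then g w z else 1 - g w z with hq
  have hq0 : ∀ z, 0 ≤ q z := by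
    intro z; rw [hq]
    have := hg01 w z
    simp only [Set.mem_Icc] at this
    by_cases h : z ∈ E <;> simp [h] <;> linarith [this.1, this.2]
  -- probability of a single coordinate event
  have hsingle : ∀ (i : {p : (L × L) × ℕ × ℕ // p.1.1 ≤ p.1.2}) (z : L),
      P ((U i) ⁻¹' BB z) = ENNReal.ofReal (q z) := by
    intro i z
    have := hg01 w z
    simp only [Set.mem_Icc] at this
    rw [← Measure.map_apply (hU_meas i) (hBBmeas z), hU_unif i,
      Measure.restrict_apply (hBBmeas z)]
    by_cases h : z ∈ E
    · have : BB z ∩ Set.Icc 0 1 = Set.Icc 0 (g w z) := by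
        rw [hBB]; simp only [h, if_true]
        ext x
        simp only [Set.mem_inter_iff, Set.mem_Iic, Set.mem_Icc]
        constructor
        · rintro ⟨h1, h2, h3⟩; exact ⟨h2, h1⟩
        · rintro ⟨h1, h2⟩; exact ⟨h2, h1, h2.trans (hg01 w z).2⟩
      rw [this, Real.volume_Icc, hq]
      simp [h]
    · have : BB z ∩ Set.Icc 0 1 = Set.Ioc (g w z) 1 := by
        rw [hBB]; simp only [h, if_false]
        ext x
        simp only [Set.mem_inter_iff, Set.mem_Ioi, Set.mem_Icc, Set.mem_Ioc]
        constructor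
        · rintro ⟨h1, h2, h3⟩; exact ⟨h1, h3⟩
        · rintro ⟨h1, h2⟩; exact ⟨h1, (hg01 w z).1.trans h1.le, h2⟩
      rw [this, Real.volume_Ioc, hq]
      simp [h]
  -- rewrite the double intersection as an intersection over an image finset
  set ι : ℕ × L → {p : (L × L) × ℕ × ℕ // p.1.1 ≤ p.1.2} :=
    fun pr => pairIdx w pr.2 pr.1 (k pr.2) with hι
  have hA : (⋂ j ∈ s, patSet U g w V E k j)
      = ⋂ i ∈ (s ×ˢ V).image ι, (U i) ⁻¹' BB (zOf w i) := by
    rw [Finset.set_biInter_finset_image]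
    ext ω
    simp only [Set.mem_iInter, Finset.mem_product, Set.mem_preimage]
    constructor
    · rintro h ⟨j, z⟩ ⟨hj, hz⟩
      have hzw : z ≠ w := fun hzw => hwV (hzw ▸ hz)
      have h2 := h j hj
      rw [patSet_eq_iInter] at h2
      simp only [Set.mem_iInter, Set.mem_preimage] at h2
      have h3 := h2 z hz
      rw [hι]
      simp only []
      rw [zOf_pairIdx hzw, ← Uext_eq_pairIdx U w z j (k z)]
      exact h3
    · intro h j hj
      rw [patSet_eq_iInter]
      simp only [Set.mem_iInter, Set.mem_preimage]
      intro z hz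
      have hzw : z ≠ w := fun hzw => hwV (hzw ▸ hz)
      have h3 := h (j, z) ⟨hj, hz⟩
      rw [hι] at h3
      simp only [] at h3
      rw [zOf_pairIdx hzw, ← Uext_eq_pairIdx U w z j (k z)] at h3
      exact h3
  rw [hA]
  have hinj : ∀ pr ∈ s ×ˢ V, ∀ pr' ∈ s ×ˢ V, ι pr = ι pr' → pr = pr' := by
    rintro ⟨j, z⟩ hpr ⟨j', z'⟩ hpr' h
    simp only [Finset.mem_product] at hpr hpr'
    have hzw : z ≠ w := fun hh => hwV (hh ▸ hpr.2)
    have hzw' : z' ≠ w := fun hh => hwV (hh ▸ hpr'.2)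
    obtain ⟨h1, h2⟩ := pairIdx_inj hzw hzw' h
    exact Prod.ext h2 h1
  rw [hU_indep.meas_biInter (fun i _ => ⟨BB (zOf w i), hBBmeas _, rfl⟩),
    Finset.prod_image hinj]
  have hfac : ∀ pr ∈ s ×ˢ V, P ((U (ι pr)) ⁻¹' BB (zOf w (ι pr))) = ENNReal.ofReal (q pr.2) := by
    rintro ⟨j, z⟩ hpr
    simp only [Finset.mem_product] at hpr
    have hzw : z ≠ w := fun hh => hwV (hh ▸ hpr.2)
    rw [hι]
    simp only []
    rw [zOf_pairIdx hzw, hsingle]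
  rw [Finset.prod_congr rfl hfac, Finset.prod_product]
  have hinner : ∀ j : ℕ, (∏ z ∈ V, ENNReal.ofReal (q z))
      = ENNReal.ofReal ((∏ z ∈ E, g w z) * ∏ z ∈ V \ E, (1 - g w z)) := by
    intro j
    rw [← ENNReal.ofReal_prod_of_nonneg (fun z _ => hq0 z)]
    congr 1
    rw [← Finset.prod_sdiff hEV, mul_comm]
    congr 1
    · exact Finset.prod_congr rfl (fun z hz => by rw [hq]; simp [hz])
    · refine Finset.prod_congr rfl (fun z hz => ?_)
      rw [Finset.mem_sdiff] at hz
      rw [hq]; simp [hz.2]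
  rw [Finset.prod_congr rfl (fun j _ => hinner j), Finset.prod_const]

lemma ncard_patSet (N : ℕ) (ω : Ω) :
    (Set.ncard {j : ℕ | 1 ≤ j ∧ j ≤ N ∧ ∀ z ∈ V,
        (z ∈ E → Uext U w z j (k z) ω ≤ g w z) ∧
        (z ∉ E → g w z < Uext U w z j (k z) ω)} : ℝ)
      = (∑ j ∈ Finset.Icc 1 N, (patSet U g w V E k j).indicator (fun _ => (1:ℝ))) ω := by
  classical
  have hset : {j : ℕ | 1 ≤ j ∧ j ≤ N ∧ ∀ z ∈ V,
      (z ∈ E → Uext U w z j (k z) ω ≤ g w z) ∧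
      (z ∉ E → g w z < Uext U w z j (k z) ω)}
      = ↑((Finset.Icc 1 N).filter (fun j => ω ∈ patSet U g w V E k j)) := by
    ext j
    simp only [Set.mem_setOf_eq, Finset.coe_filter, Finset.mem_Icc, patSet, and_assoc]
  rw [hset, Set.ncard_coe_finset, Finset.sum_apply]
  simp only [Set.indicator_apply]
  rw [Finset.sum_boole]

lemma tuple_bound (hU_meas : ∀ i, Measurable (U i))
    (hU_indep : iIndepFun U P)
    (hU_unif : ∀ i, Measure.map (U i) P = volume.restrict (Set.Icc (0 : ℝ) 1))
    (hg01 : ∀ w z, g w z ∈ Set.Icc (0 : ℝ) 1)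
    {α : ℝ} (hα : α ∈ Set.Ioo (0 : ℝ) (1/2))
    (hwV : w ∉ V) (hEV : E ⊆ V)
    {pmin : ℝ} (hpmin : 0 < pmin)
    (hpq : (∏ z ∈ E, g w z) * ∏ z ∈ V \ E, (1 - g w z) = 0 ∨
      pmin ≤ (∏ z ∈ E, g w z) * ∏ z ∈ V \ E, (1 - g w z)) (M : ℕ) :
    P ({ω : Ω | ¬ ((Set.ncard {j : ℕ | 1 ≤ j ∧ j ≤ ⌈(M : ℝ) * (1 + α)⌉₊ ∧ ∀ z ∈ V,
            (z ∈ E → Uext U w z j (k z) ω ≤ g w z) ∧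
            (z ∉ E → g w z < Uext U w z j (k z) ω)} : ℝ)
          ≤ (M : ℝ) * ((∏ z ∈ E, g w z) * ∏ z ∈ V \ E, (1 - g w z)) * (1 + α) ^ 2)}
      ∪ {ω : Ω | ¬ ((M : ℝ) * ((∏ z ∈ E, g w z) * ∏ z ∈ V \ E, (1 - g w z)) * (1 - α) ^ 2
          ≤ (Set.ncard {j : ℕ | 1 ≤ j ∧ j ≤ ⌊(M : ℝ) * (1 - α)⌋₊ ∧ ∀ z ∈ V,
            (z ∈ E → Uext U w z j (k z) ω ≤ g w z) ∧
            (z ∉ E → g w z < Uext U w z j (k z) ω)} : ℝ))})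
      ≤ ENNReal.ofReal (2 * Real.exp (1 - (pmin * min ((1 + α) * Real.log (1 + α) - α)
          (((1 - α) * Real.log (1 - α) + α) / 2)) * M)) := by
  classical
  obtain ⟨hα0, hα2⟩ := hα
  set p : ℝ := (∏ z ∈ E, g w z) * ∏ z ∈ V \ E, (1 - g w z) with hpdef
  set c₁ : ℝ := pmin * min ((1 + α) * Real.log (1 + α) - α)
      (((1 - α) * Real.log (1 - α) + α) / 2) with hc₁
  have hδ := delta_pos hα0 (by linarith)
  have hδ' := delta'_pos hα0 (by linarith)
  have hAmeas := patSet_measurable U g w V E k hU_meas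
  have hp := patSet_prob P U g w V E k hU_meas hU_indep hU_unif hg01 hwV hEV
  rw [← hpdef] at hp
  rcases hpq with hp0 | hple
  · -- p = 0
    have hBadL : {ω : Ω | ¬ ((M : ℝ) * p * (1 - α) ^ 2
        ≤ (Set.ncard {j : ℕ | 1 ≤ j ∧ j ≤ ⌊(M : ℝ) * (1 - α)⌋₊ ∧ ∀ z ∈ V,
          (z ∈ E → Uext U w z j (k z) ω ≤ g w z) ∧
          (z ∉ E → g w z < Uext U w z j (k z) ω)} : ℝ))} = ∅ := by
      ext ω
      simp only [Set.mem_setOf_eq, Set.mem_empty_iff_false, iff_false, not_not, hp0,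
        mul_zero, zero_mul]
      positivity
    have hBadU : {ω : Ω | ¬ ((Set.ncard {j : ℕ | 1 ≤ j ∧ j ≤ ⌈(M : ℝ) * (1 + α)⌉₊ ∧ ∀ z ∈ V,
          (z ∈ E → Uext U w z j (k z) ω ≤ g w z) ∧
          (z ∉ E → g w z < Uext U w z j (k z) ω)} : ℝ)
        ≤ (M : ℝ) * p * (1 + α) ^ 2)}
        ⊆ ⋃ j ∈ Finset.Icc 1 ⌈(M : ℝ) * (1 + α)⌉₊, patSet U g w V E k j := by
      intro ω hω
      simp only [Set.mem_setOf_eq] at hω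
      rw [hp0] at hω
      simp only [mul_zero, zero_mul] at hω
      have hne : {j : ℕ | 1 ≤ j ∧ j ≤ ⌈(M : ℝ) * (1 + α)⌉₊ ∧ ∀ z ∈ V,
          (z ∈ E → Uext U w z j (k z) ω ≤ g w z) ∧
          (z ∉ E → g w z < Uext U w z j (k z) ω)}.Nonempty := by
        by_contra hemp
        rw [Set.not_nonempty_iff_eq_empty] at hemp
        rw [hemp] at hω
        simp at hω
      obtain ⟨j, hj1, hj2, hj3⟩ := hne
      exact Set.mem_biUnion (Finset.mem_Icc.mpr ⟨hj1, hj2⟩) hj3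
    have hzeroU : P (⋃ j ∈ Finset.Icc 1 ⌈(M : ℝ) * (1 + α)⌉₊, patSet U g w V E k j) = 0 := by
      refine measure_biUnion_null_iff (Set.to_countable _) |>.mpr fun j _ => ?_
      have := hp {j}
      simpa [hp0] using this
    refine le_trans (measure_union_le _ _) ?_
    rw [hBadL, measure_empty, add_zero]
    refine le_trans (le_trans (measure_mono hBadU) hzeroU.le) zero_le
  · -- pmin ≤ p
    have hq0 : ∀ z, 0 ≤ (if z ∈ E then g w z else 1 - g w z) := by
      intro z
      have := hg01 w z
      simp only [Set.mem_Icc] at this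
      by_cases h : z ∈ E <;> simp [h] <;> linarith [this.1, this.2]
    have hp0 : 0 ≤ p := le_trans hpmin.le hple
    have hp1 : p ≤ 1 := by
      rw [hpdef]
      have h1 : ∏ z ∈ E, g w z ≤ 1 :=
        Finset.prod_le_one (fun z _ => (hg01 w z).1) (fun z _ => (hg01 w z).2)
      have h2 : ∏ z ∈ V \ E, (1 - g w z) ≤ 1 :=
        Finset.prod_le_one (fun z _ => by linarith [(hg01 w z).2])
          (fun z _ => by linarith [(hg01 w z).1])
      have h3 : (0:ℝ) ≤ ∏ z ∈ E, g w z := Finset.prod_nonneg (fun z _ => (hg01 w z).1)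
      nlinarith
    have hMnn : (0:ℝ) ≤ (M:ℝ) := Nat.cast_nonneg M
    -- upper tail
    have hup : P {ω : Ω | ¬ ((Set.ncard {j : ℕ | 1 ≤ j ∧ j ≤ ⌈(M : ℝ) * (1 + α)⌉₊ ∧ ∀ z ∈ V,
          (z ∈ E → Uext U w z j (k z) ω ≤ g w z) ∧
          (z ∉ E → g w z < Uext U w z j (k z) ω)} : ℝ)
        ≤ (M : ℝ) * p * (1 + α) ^ 2)} ≤ ENNReal.ofReal (Real.exp (1 - c₁ * M)) := by
      have hsub : {ω : Ω | ¬ ((Set.ncard {j : ℕ | 1 ≤ j ∧ j ≤ ⌈(M : ℝ) * (1 + α)⌉₊ ∧ ∀ z ∈ V,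
            (z ∈ E → Uext U w z j (k z) ω ≤ g w z) ∧
            (z ∉ E → g w z < Uext U w z j (k z) ω)} : ℝ)
          ≤ (M : ℝ) * p * (1 + α) ^ 2)}
          ⊆ {ω : Ω | (M : ℝ) * p * (1 + α) ^ 2 ≤ (∑ j ∈ Finset.Icc 1 ⌈(M : ℝ) * (1 + α)⌉₊,
              (patSet U g w V E k j).indicator (fun _ => (1:ℝ))) ω} := by
        intro ω hω
        simp only [Set.mem_setOf_eq] at hω ⊢
        rw [← ncard_patSet]
        exact (lt_of_not_ge hω).le
      refine le_trans (measure_mono hsub) ?_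
      refine le_trans (binom_upper_tail _ hAmeas hp0 hp1 hp _ (t := Real.log (1+α)) _
        (Real.log_nonneg (by linarith))) ?_
      refine ENNReal.ofReal_le_ofReal ?_
      rw [Real.exp_log (by linarith : (0:ℝ) < 1 + α)]
      refine Real.exp_le_exp.mpr ?_
      have hexp := upper_exponent (N := (⌈(M : ℝ) * (1 + α)⌉₊ : ℝ)) hα0 (by linarith)
        hpmin hple hp1 hMnn
        (le_of_lt (by
          have := Nat.ceil_lt_add_one (by positivity : (0:ℝ) ≤ (M:ℝ) * (1 + α))
          linarith))
        (Nat.cast_nonneg _)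
      refine le_trans hexp ?_
      have hmin : c₁ ≤ pmin * ((1 + α) * Real.log (1 + α) - α) :=
        mul_le_mul_of_nonneg_left (min_le_left _ _) hpmin.le
      nlinarith
    -- lower tail
    have hlo : P {ω : Ω | ¬ ((M : ℝ) * p * (1 - α) ^ 2
        ≤ (Set.ncard {j : ℕ | 1 ≤ j ∧ j ≤ ⌊(M : ℝ) * (1 - α)⌋₊ ∧ ∀ z ∈ V,
          (z ∈ E → Uext U w z j (k z) ω ≤ g w z) ∧
          (z ∉ E → g w z < Uext U w z j (k z) ω)} : ℝ))}
        ≤ ENNReal.ofReal (Real.exp (1 - c₁ * M)) := by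
      have hsub : {ω : Ω | ¬ ((M : ℝ) * p * (1 - α) ^ 2
          ≤ (Set.ncard {j : ℕ | 1 ≤ j ∧ j ≤ ⌊(M : ℝ) * (1 - α)⌋₊ ∧ ∀ z ∈ V,
            (z ∈ E → Uext U w z j (k z) ω ≤ g w z) ∧
            (z ∉ E → g w z < Uext U w z j (k z) ω)} : ℝ))}
          ⊆ {ω : Ω | (∑ j ∈ Finset.Icc 1 ⌊(M : ℝ) * (1 - α)⌋₊,
              (patSet U g w V E k j).indicator (fun _ => (1:ℝ))) ω ≤ (M : ℝ) * p * (1 - α) ^ 2} := by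
        intro ω hω
        simp only [Set.mem_setOf_eq] at hω ⊢
        rw [← ncard_patSet]
        exact (lt_of_not_ge hω).le
      refine le_trans (measure_mono hsub) ?_
      refine le_trans (binom_lower_tail _ hAmeas hp0 hp1 hp _ (t := Real.log (1-α)) _
        (Real.log_nonpos (by linarith) (by linarith))) ?_
      refine ENNReal.ofReal_le_ofReal ?_
      rw [Real.exp_log (by linarith : (0:ℝ) < 1 - α)]
      refine Real.exp_le_exp.mpr ?_
      have hexp := lower_exponent (N := (⌊(M : ℝ) * (1 - α)⌋₊ : ℝ)) hα0 hα2
        hpmin hple hp1 hMnn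
        (le_of_lt (by
          have := Nat.sub_one_lt_floor ((M:ℝ) * (1 - α))
          linarith))
        (Nat.cast_nonneg _)
      refine le_trans hexp ?_
      have hmin : c₁ ≤ pmin * (((1 - α) * Real.log (1 - α) + α) / 2) :=
        mul_le_mul_of_nonneg_left (min_le_right _ _) hpmin.le
      nlinarith
    refine le_trans (measure_union_le _ _) ?_
    refine le_trans (add_le_add hup hlo) ?_
    rw [← ENNReal.ofReal_add (Real.exp_nonneg _) (Real.exp_nonneg _)]
    refine ENNReal.ofReal_le_ofReal (by linarith)
end pat

end aux

/-- Large deviations estimate for the numbers of "edge patterns" in the random connection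
model discretisation: with probability at least `1 - e^{-cM}`, simultaneously for every
`w ∈ L`, every `V ⊆ L∖{w}`, every `E ⊆ V` and every vector `𝐤` of indices in
`{1,…,⌈M(1+α)⌉}`, the number of `j ∈ {1,…,⌈M(1+α)⌉}` realising the pattern `E` is at
most `M g^E_{V,w} (1+α)²`, and the number of `j ∈ {1,…,⌊M(1-α)⌋}` realising it is at
least `M g^E_{V,w} (1-α)²`. -/
theorem edge_ldp {L : Type} [Fintype L] [LinearOrder L]
    {Ω : Type} [MeasurableSpace Ω] (P : Measure Ω) [IsProbabilityMeasure P]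
    (U : {p : (L × L) × ℕ × ℕ // p.1.1 ≤ p.1.2} → Ω → ℝ)
    (hU_meas : ∀ i, Measurable (U i))
    (hU_indep : iIndepFun U P)
    (hU_unif : ∀ i, Measure.map (U i) P = volume.restrict (Set.Icc (0 : ℝ) 1))
    (g : L → L → ℝ) (hg01 : ∀ w z, g w z ∈ Set.Icc (0 : ℝ) 1)
    (hg_symm : ∀ w z, g w z = g z w)
    (α : ℝ) (hα : α ∈ Set.Ioo (0 : ℝ) (1/2)) :
    ∃ c : ℝ, 0 < c ∧ ∃ M₀ : ℕ, 1 ≤ M₀ ∧ ∀ M : ℕ, M₀ ≤ M →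
      ENNReal.ofReal (1 - Real.exp (-c * M))
        ≤ P {ω | ∀ w : L, ∀ V : Finset L, w ∉ V → ∀ E ⊆ V, ∀ k : L → ℕ,
            (∀ z ∈ V, k z ∈ Finset.Icc 1 ⌈(M : ℝ) * (1 + α)⌉₊) →
            ((Set.ncard {j : ℕ | 1 ≤ j ∧ j ≤ ⌈(M : ℝ) * (1 + α)⌉₊ ∧ ∀ z ∈ V,
                  (z ∈ E → Uext U w z j (k z) ω ≤ g w z) ∧
                  (z ∉ E → g w z < Uext U w z j (k z) ω)} : ℝ)
                ≤ (M : ℝ) * ((∏ z ∈ E, g w z) * ∏ z ∈ V \ E, (1 - g w z)) * (1 + α) ^ 2)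
            ∧
            ((M : ℝ) * ((∏ z ∈ E, g w z) * ∏ z ∈ V \ E, (1 - g w z)) * (1 - α) ^ 2
                ≤ (Set.ncard {j : ℕ | 1 ≤ j ∧ j ≤ ⌊(M : ℝ) * (1 - α)⌋₊ ∧ ∀ z ∈ V,
                  (z ∈ E → Uext U w z j (k z) ω ≤ g w z) ∧
                  (z ∉ E → g w z < Uext U w z j (k z) ω)} : ℝ))} := by
  
  classical
  obtain ⟨hα0, hα2⟩ := hα
  set n := Fintype.card L with hn
  -- minimal positive pattern probability
  set pfun : L × Finset L × Finset L → ℝ :=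
    fun t => (∏ z ∈ t.2.2, g t.1 z) * ∏ z ∈ t.2.1 \ t.2.2, (1 - g t.1 z) with hpfun
  set ps : Finset ℝ :=
    ((Finset.univ : Finset (L × Finset L × Finset L)).image pfun).filter (fun x => 0 < x)
    with hps
  set pmin : ℝ := if h : ps.Nonempty then ps.min' h else 1 with hpmdef
  have hps_pos : ∀ x ∈ ps, 0 < x := by
    intro x hx
    rw [hps, Finset.mem_filter] at hx
    exact hx.2
  have hpmin : 0 < pmin := by
    rw [hpmdef]; split
    · rename_i h
      exact hps_pos _ (ps.min'_mem h)
    · norm_num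
  have hpq : ∀ (w : L) (V E : Finset L),
      (∏ z ∈ E, g w z) * ∏ z ∈ V \ E, (1 - g w z) = 0 ∨
      pmin ≤ (∏ z ∈ E, g w z) * ∏ z ∈ V \ E, (1 - g w z) := by
    intro w V E
    by_cases h : (∏ z ∈ E, g w z) * ∏ z ∈ V \ E, (1 - g w z) = 0
    · exact Or.inl h
    · refine Or.inr ?_
      have hnn : 0 ≤ (∏ z ∈ E, g w z) * ∏ z ∈ V \ E, (1 - g w z) :=
        mul_nonneg (Finset.prod_nonneg fun z _ => (hg01 w z).1)
          (Finset.prod_nonneg fun z _ => by linarith [(hg01 w z).2])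
      have hpos := lt_of_le_of_ne hnn (Ne.symm h)
      have hmem : (∏ z ∈ E, g w z) * ∏ z ∈ V \ E, (1 - g w z) ∈ ps := by
        rw [hps, Finset.mem_filter]
        exact ⟨Finset.mem_image_of_mem pfun (Finset.mem_univ (w, V, E)), hpos⟩
      have hne : ps.Nonempty := ⟨_, hmem⟩
      rw [hpmdef, dif_pos hne]
      exact ps.min'_le _ hmem
  have hδpos : 0 < (1 + α) * Real.log (1 + α) - α := delta_pos hα0 (by linarith)
  have hδ'pos : 0 < ((1 - α) * Real.log (1 - α) + α) / 2 := by
    have := delta'_pos hα0 (by linarith); linarith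
  set c₁ : ℝ := pmin * min ((1 + α) * Real.log (1 + α) - α)
      (((1 - α) * Real.log (1 - α) + α) / 2) with hc₁def
  have hc₁ : 0 < c₁ := mul_pos hpmin (lt_min hδpos hδ'pos)
  obtain ⟨M₀, hM₀2, hM₀⟩ := eventually_poly_le_exp
      ((n : ℝ) * 2 ^ n * 2 ^ n * 2 ^ n * (2 * Real.exp 1)) (c₁ / 2) (by positivity) n
  refine ⟨c₁ / 2, by positivity, M₀, by omega, fun M hM => ?_⟩
  have hM2 : (2 : ℕ) ≤ M := le_trans hM₀2 hM
  have hMpos : (0 : ℝ) < (M : ℝ) := by exact_mod_cast (show 0 < M by omega)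
  set N : ℕ := ⌈(M : ℝ) * (1 + α)⌉₊ with hNdef
  have hN1 : 1 ≤ N := by
    rw [hNdef]
    exact Nat.one_le_iff_ne_zero.mpr (by
      have : (0:ℝ) < (M : ℝ) * (1 + α) := by positivity
      simpa [Nat.ceil_eq_zero, not_le] using (Nat.ceil_pos.mpr this).ne')
  set F : Set Ω := {ω | ∀ w : L, ∀ V : Finset L, w ∉ V → ∀ E ⊆ V, ∀ k : L → ℕ,
            (∀ z ∈ V, k z ∈ Finset.Icc 1 ⌈(M : ℝ) * (1 + α)⌉₊) →
            ((Set.ncard {j : ℕ | 1 ≤ j ∧ j ≤ ⌈(M : ℝ) * (1 + α)⌉₊ ∧ ∀ z ∈ V,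
                  (z ∈ E → Uext U w z j (k z) ω ≤ g w z) ∧
                  (z ∉ E → g w z < Uext U w z j (k z) ω)} : ℝ)
                ≤ (M : ℝ) * ((∏ z ∈ E, g w z) * ∏ z ∈ V \ E, (1 - g w z)) * (1 + α) ^ 2)
            ∧
            ((M : ℝ) * ((∏ z ∈ E, g w z) * ∏ z ∈ V \ E, (1 - g w z)) * (1 - α) ^ 2
                ≤ (Set.ncard {j : ℕ | 1 ≤ j ∧ j ≤ ⌊(M : ℝ) * (1 - α)⌋₊ ∧ ∀ z ∈ V,
                  (z ∈ E → Uext U w z j (k z) ω ≤ g w z) ∧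
                  (z ∉ E → g w z < Uext U w z j (k z) ω)} : ℝ))} with hF
  set Bad : L → Finset L → Finset L → (L → ℕ) → Set Ω := fun w V E k =>
    if w ∉ V ∧ E ⊆ V then
      {ω : Ω | ¬ ((Set.ncard {j : ℕ | 1 ≤ j ∧ j ≤ ⌈(M : ℝ) * (1 + α)⌉₊ ∧ ∀ z ∈ V,
            (z ∈ E → Uext U w z j (k z) ω ≤ g w z) ∧
            (z ∉ E → g w z < Uext U w z j (k z) ω)} : ℝ)
          ≤ (M : ℝ) * ((∏ z ∈ E, g w z) * ∏ z ∈ V \ E, (1 - g w z)) * (1 + α) ^ 2)}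
      ∪ {ω : Ω | ¬ ((M : ℝ) * ((∏ z ∈ E, g w z) * ∏ z ∈ V \ E, (1 - g w z)) * (1 - α) ^ 2
          ≤ (Set.ncard {j : ℕ | 1 ≤ j ∧ j ≤ ⌊(M : ℝ) * (1 - α)⌋₊ ∧ ∀ z ∈ V,
            (z ∈ E → Uext U w z j (k z) ω ≤ g w z) ∧
            (z ∉ E → g w z < Uext U w z j (k z) ω)} : ℝ))}
    else ∅ with hBadDef
  set KS : Finset L → Finset (L → ℕ) :=
    fun V => Fintype.piFinset (fun z => if z ∈ V then Finset.Icc 1 N else {0}) with hKSdef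
  -- the complement of F is covered by the bad events
  have hsub : Fᶜ ⊆ ⋃ w ∈ (Finset.univ : Finset L), ⋃ V ∈ (Finset.univ : Finset (Finset L)),
      ⋃ E ∈ (Finset.univ : Finset (Finset L)), ⋃ k ∈ KS V, Bad w V E k := by
    intro ω hω
    rw [Set.mem_compl_iff, hF, Set.mem_setOf_eq] at hω
    simp only [not_forall, Classical.not_imp] at hω
    obtain ⟨w, V, hwV, E, hEV, k, hk, hbad⟩ := hω
    set k' : L → ℕ := fun z => if z ∈ V then k z else 0 with hk'def
    have hk'mem : k' ∈ KS V := by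
      rw [hKSdef, Fintype.mem_piFinset]
      intro z
      by_cases hz : z ∈ V
      · simp only [hk'def, hz, if_true]
        exact hk z hz
      · simp [hk'def, hz]
    have hcnt : ∀ N' : ℕ,
        {j : ℕ | 1 ≤ j ∧ j ≤ N' ∧ ∀ z ∈ V,
          (z ∈ E → Uext U w z j (k' z) ω ≤ g w z) ∧
          (z ∉ E → g w z < Uext U w z j (k' z) ω)}
        = {j : ℕ | 1 ≤ j ∧ j ≤ N' ∧ ∀ z ∈ V,
          (z ∈ E → Uext U w z j (k z) ω ≤ g w z) ∧
          (z ∉ E → g w z < Uext U w z j (k z) ω)} := by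
      intro N'
      ext j
      simp only [Set.mem_setOf_eq]
      refine and_congr_right fun _ => and_congr_right fun _ => forall₂_congr fun z hz => ?_
      rw [hk'def]
      simp only [hz, if_true]
    refine Set.mem_biUnion (Finset.mem_univ w) ?_
    refine Set.mem_biUnion (Finset.mem_univ V) ?_
    refine Set.mem_biUnion (Finset.mem_univ E) ?_
    refine Set.mem_biUnion hk'mem ?_
    simp only [hBadDef, if_pos (And.intro hwV hEV)]
    rcases not_and_or.mp hbad with h | h
    · left
      rw [Set.mem_setOf_eq, hcnt _]
      exact h
    · right
      rw [Set.mem_setOf_eq, hcnt _]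
      exact h
  -- probability of each bad event
  have hBadBound : ∀ w V E (k : L → ℕ),
      P (Bad w V E k) ≤ ENNReal.ofReal (2 * Real.exp (1 - c₁ * M)) := by
    intro w V E k
    simp only [hBadDef]
    split
    · rename_i h
      rw [hc₁def]
      exact tuple_bound P U g w V E k hU_meas hU_indep hU_unif hg01 ⟨hα0, hα2⟩ h.1 h.2
        hpmin (hpq w V E) M
    · simp only [measure_empty]
      exact zero_le
  -- cardinality bound for the index finsets
  have hcard : ∀ V : Finset L, (KS V).card ≤ N ^ n := by
    intro V
    rw [hKSdef, Fintype.card_piFinset]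
    calc ∏ z : L, (if z ∈ V then Finset.Icc 1 N else {0}).card
        ≤ ∏ _z : L, N := by
          refine Finset.prod_le_prod' ?_
          intro z _
          by_cases hz : z ∈ V
          · simp [hz, Nat.card_Icc]
          · simpa [hz] using hN1
      _ = N ^ n := by rw [Finset.prod_const, Finset.card_univ]
  set β : ENNReal := ENNReal.ofReal (2 * Real.exp (1 - c₁ * M)) with hβ
  have hsum : ∀ (γ : Type) (s : Finset γ) (f : γ → Set Ω) (b : ENNReal),
      (∀ i ∈ s, P (f i) ≤ b) → P (⋃ i ∈ s, f i) ≤ s.card * b := by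
    intro γ s f b hb
    refine le_trans (measure_biUnion_finset_le s f) ?_
    refine le_trans (Finset.sum_le_sum hb) ?_
    rw [Finset.sum_const, nsmul_eq_mul]
  have h_k : ∀ (w : L) (V E : Finset L), P (⋃ k ∈ KS V, Bad w V E k)
      ≤ ((N ^ n : ℕ) : ENNReal) * β := by
    intro w V E
    refine le_trans (hsum (L → ℕ) (KS V) _ β (fun k _ => hBadBound w V E k)) ?_
    exact mul_le_mul' (by exact_mod_cast hcard V) le_rfl
  have h_E : ∀ (w : L) (V : Finset L),
      P (⋃ E ∈ (Finset.univ : Finset (Finset L)), ⋃ k ∈ KS V, Bad w V E k)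
      ≤ ((2 ^ n : ℕ) : ENNReal) * (((N ^ n : ℕ) : ENNReal) * β) := by
    intro w V
    refine le_trans (hsum (Finset L) Finset.univ _ _ (fun E _ => h_k w V E)) ?_
    rw [Finset.card_univ, Fintype.card_finset, ← hn]
  have h_V : ∀ w : L,
      P (⋃ V ∈ (Finset.univ : Finset (Finset L)), ⋃ E ∈ (Finset.univ : Finset (Finset L)),
        ⋃ k ∈ KS V, Bad w V E k)
      ≤ ((2 ^ n : ℕ) : ENNReal) * (((2 ^ n : ℕ) : ENNReal) * (((N ^ n : ℕ) : ENNReal) * β)) := by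
    intro w
    refine le_trans (hsum (Finset L) Finset.univ _ _ (fun V _ => h_E w V)) ?_
    rw [Finset.card_univ, Fintype.card_finset, ← hn]
  have hPBig : P (⋃ w ∈ (Finset.univ : Finset L), ⋃ V ∈ (Finset.univ : Finset (Finset L)),
      ⋃ E ∈ (Finset.univ : Finset (Finset L)), ⋃ k ∈ KS V, Bad w V E k)
      ≤ ((n : ℕ) : ENNReal) * (((2 ^ n : ℕ) : ENNReal) * (((2 ^ n : ℕ) : ENNReal)
          * (((N ^ n : ℕ) : ENNReal) * β))) := by
    refine le_trans (hsum L Finset.univ _ _ (fun w _ => h_V w)) ?_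
    rw [Finset.card_univ, ← hn]
  -- numeric bound
  have hNle : (N : ℝ) ≤ 2 * M := by
    rw [hNdef]
    have h1 := Nat.ceil_lt_add_one (by positivity : (0:ℝ) ≤ (M : ℝ) * (1 + α))
    have h2 : (2:ℝ) ≤ (M:ℝ) := by exact_mod_cast hM2
    nlinarith
  have hreal : (n : ℝ) * (2 ^ n * (2 ^ n * (((N : ℝ) ^ n) * (2 * Real.exp (1 - c₁ * M)))))
      ≤ Real.exp (-(c₁ / 2) * M) := by
    have hNn : (N : ℝ) ^ n ≤ 2 ^ n * (M : ℝ) ^ n := by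
      rw [← mul_pow]
      exact pow_le_pow_left₀ (Nat.cast_nonneg N) hNle n
    have hE : Real.exp (1 - c₁ * M)
        = Real.exp 1 * (Real.exp (-(c₁ / 2) * M) * Real.exp (-(c₁ / 2) * M)) := by
      rw [← Real.exp_add, ← Real.exp_add]
      congr 1
      ring
    have hC := hM₀ M hM
    have hexpnn : (0:ℝ) ≤ Real.exp (-(c₁/2) * M) := (Real.exp_pos _).le
    calc (n : ℝ) * (2 ^ n * (2 ^ n * (((N : ℝ) ^ n) * (2 * Real.exp (1 - c₁ * M)))))
        = ((n : ℝ) * 2 ^ n * 2 ^ n * (2 * Real.exp (1 - c₁ * M))) * (N : ℝ) ^ n := by ring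
      _ ≤ ((n : ℝ) * 2 ^ n * 2 ^ n * (2 * Real.exp (1 - c₁ * M))) * (2 ^ n * (M : ℝ) ^ n) := by
          refine mul_le_mul_of_nonneg_left hNn (by positivity)
      _ = ((n : ℝ) * 2 ^ n * 2 ^ n * 2 ^ n * (2 * Real.exp 1) * (M : ℝ) ^ n
            * Real.exp (-(c₁/2) * M)) * Real.exp (-(c₁/2) * M) := by
          rw [hE]; ring
      _ ≤ 1 * Real.exp (-(c₁/2) * M) := by
          refine mul_le_mul_of_nonneg_right ?_ hexpnn
          calc (n : ℝ) * 2 ^ n * 2 ^ n * 2 ^ n * (2 * Real.exp 1) * (M : ℝ) ^ n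
              * Real.exp (-(c₁/2) * M)
              = ((n : ℝ) * 2 ^ n * 2 ^ n * 2 ^ n * (2 * Real.exp 1)) * (M : ℝ) ^ n
              * Real.exp (-(c₁/2) * M) := by ring
            _ ≤ 1 := hC
      _ = Real.exp (-(c₁/2) * M) := one_mul _
  -- assemble in ℝ≥0∞
  have hPFc : P Fᶜ ≤ ENNReal.ofReal (Real.exp (-(c₁ / 2) * M)) := by
    refine le_trans (measure_mono hsub) (le_trans hPBig ?_)
    have hcast : ((n : ℕ) : ENNReal) * (((2 ^ n : ℕ) : ENNReal) * (((2 ^ n : ℕ) : ENNReal)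
          * (((N ^ n : ℕ) : ENNReal) * β)))
        = ENNReal.ofReal ((n : ℝ) * (2 ^ n * (2 ^ n * (((N : ℝ) ^ n)
            * (2 * Real.exp (1 - c₁ * M)))))) := by
      rw [hβ, ← ENNReal.ofReal_natCast n, ← ENNReal.ofReal_natCast (2 ^ n),
        ← ENNReal.ofReal_natCast (N ^ n),
        ← ENNReal.ofReal_mul (Nat.cast_nonneg _), ← ENNReal.ofReal_mul (Nat.cast_nonneg _),
        ← ENNReal.ofReal_mul (Nat.cast_nonneg _), ← ENNReal.ofReal_mul (Nat.cast_nonneg _)]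
      congr 1
      push_cast
      ring
    rw [hcast]
    exact ENNReal.ofReal_le_ofReal hreal
  have hunion : (1 : ENNReal) ≤ P F + P Fᶜ := by
    have h1 : P (F ∪ Fᶜ) ≤ P F + P Fᶜ := measure_union_le _ _
    rwa [Set.union_compl_self, measure_univ] at h1
  have hPF : 1 - P Fᶜ ≤ P F := tsub_le_iff_right.mpr hunion
  calc ENNReal.ofReal (1 - Real.exp (-(c₁ / 2) * M))
      = 1 - ENNReal.ofReal (Real.exp (-(c₁ / 2) * M)) := by
        rw [ENNReal.ofReal_sub _ (Real.exp_nonneg _), ENNReal.ofReal_one]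
    _ ≤ 1 - P Fᶜ := tsub_le_tsub_left hPFc 1
    _ ≤ P F := hPF
end

section
/- Let d ≥ 1 and let g : ℝ^d → [0,1] be a measurable connection function, i.e. g(x) depends only on ‖x‖ and g(x) ≥ g(y) whenever ‖x‖ ≤ ‖y‖, and assume 0 < ∫_{ℝ^d} g(x) dx < ∞. For k ≥ 2 and points x₁, …, x_k ∈ ℝ^d, define g₂(x₁, …, x_k) := Σ_{H} Π_{{i,j} ∈ E(H)} g(x_i − x_j) · Π_{{i,j} ∈ Pairs(k)∖E(H)} (1 − g(x_i − x_j)), where the sum is over all connected simple graphs H on the vertex set {1, …, k} and Pairs(k) is the set of all unordered pairs of distinct elements of {1,…,k}; equivalently, g₂(x₁,…,x_k) is the probability that the random graph on {x₁,…,x_k}, in which each pair {x_i, x_j} is joined by an edge independently with probability g(x_i − x_j), is connected. Then for every k ≥ 2, ∫_{(ℝ^d)^{k−1}} g₂(𝟎, x₁, …, x_{k−1}) dx₁ ⋯ dx_{k−1} < ∞. -/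
open MeasureTheory

/-! ### Auxiliary lemmas -/

lemma minmax_cases {α : Type*} [LinearOrder α] {x y x' y' : α}
    (h1 : min x y = min x' y') (h2 : max x y = max x' y') :
    (x = x' ∧ y = y') ∨ (x = y' ∧ y = x') := by
  rcases le_total x y with h | h <;> rcases le_total x' y' with h' | h' <;>
    simp only [min_eq_left h, min_eq_right h, max_eq_right h, max_eq_left h,
      min_eq_left h', min_eq_right h', max_eq_right h', max_eq_left h'] at h1 h2 <;>
    tauto

lemma crossing {V : Type*} {H : SimpleGraph V} {a b : V} (p : H.Walk a b) (S : Set V)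
    (ha : a ∈ S) (hb : b ∉ S) : ∃ u v, u ∈ S ∧ v ∉ S ∧ H.Adj u v := by
  induction p with
  | nil => exact absurd ha hb
  | @cons a c b h q ih =>
      by_cases hc : c ∈ S
      · exact ih hc hb
      · exact ⟨a, c, ha, hc, h⟩

lemma enumeration {m : ℕ} (H : SimpleGraph (Fin (m+1))) (hc : H.Connected) :
    ∃ σ : Fin (m+1) → Fin (m+1), Function.Bijective σ ∧ σ 0 = 0 ∧
      ∀ j : Fin m, ∃ i : Fin (m+1), (i : ℕ) ≤ (j : ℕ) ∧ H.Adj (σ i) (σ j.succ) := by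
  have main : ∀ t : ℕ, t ≤ m → ∃ v : Fin (t+1) → Fin (m+1), Function.Injective v ∧ v 0 = 0 ∧
      ∀ j : Fin t, ∃ i : Fin (t+1), (i : ℕ) ≤ (j : ℕ) ∧ H.Adj (v i) (v j.succ) := by
    intro t
    induction t with
    | zero =>
        intro _
        exact ⟨fun _ => 0, fun a b _ => by omega, rfl, fun j => j.elim0⟩
    | succ t iht =>
        intro ht
        obtain ⟨v, hinj, h0, hprop⟩ := iht (by omega)
        have hnotsurj : ¬ Function.Surjective v := by
          intro hs
          have := Fintype.card_le_of_surjective v hs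
          simp [Fintype.card_fin] at this
          omega
        rw [Function.Surjective] at hnotsurj
        push_neg at hnotsurj
        obtain ⟨b, hb⟩ := hnotsurj
        have hbS : b ∉ Set.range v := by
          rintro ⟨i, rfl⟩; exact hb i rfl
        obtain ⟨w⟩ := hc.preconnected (v 0) b
        obtain ⟨u, w', huS, hwS, hadj⟩ := crossing w (Set.range v) ⟨0, rfl⟩ hbS
        obtain ⟨i₀, rfl⟩ := huS
        refine ⟨Fin.snoc v w', ?_, ?_, ?_⟩
        · intro a b hab
          rcases Fin.eq_castSucc_or_eq_last a with ⟨a', rfl⟩ | rfl <;>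
            rcases Fin.eq_castSucc_or_eq_last b with ⟨b', rfl⟩ | rfl
          · simp only [Fin.snoc_castSucc] at hab
            exact congrArg Fin.castSucc (hinj hab)
          · simp only [Fin.snoc_castSucc, Fin.snoc_last] at hab
            exact absurd ⟨a', hab⟩ hwS
          · simp only [Fin.snoc_castSucc, Fin.snoc_last] at hab
            exact absurd ⟨b', hab.symm⟩ hwS
          · rfl
        · have hz : (0 : Fin (t+2)) = (0 : Fin (t+1)).castSucc := rfl
          rw [hz, Fin.snoc_castSucc]
          exact h0
        · intro j
          rcases Fin.eq_castSucc_or_eq_last j with ⟨j', rfl⟩ | rfl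
          · obtain ⟨i, hile, hadj'⟩ := hprop j'
            refine ⟨i.castSucc, by simpa using hile, ?_⟩
            rw [show (j'.castSucc).succ = (j'.succ).castSucc from (Fin.succ_castSucc j').symm]
            simpa only [Fin.snoc_castSucc] using hadj'
          · refine ⟨i₀.castSucc, by simp [Fin.is_le i₀], ?_⟩
            rw [Fin.succ_last]
            simpa [Fin.snoc_castSucc, Fin.snoc_last] using hadj
  obtain ⟨v, hinj, h0, hprop⟩ := main m le_rfl
  exact ⟨v, (Finite.injective_iff_bijective).1 hinj, h0, hprop⟩

lemma meas_cons_apply {d m : ℕ} (a : Fin (m+1)) :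
    Measurable (fun x : Fin m → EuclideanSpace ℝ (Fin d) =>
      (Fin.cons 0 x : Fin (m+1) → EuclideanSpace ℝ (Fin d)) a) := by
  induction a using Fin.cases with
  | zero => simpa using measurable_const
  | succ i => simpa using measurable_pi_apply i
lemma staircase {d : ℕ} (g : EuclideanSpace ℝ (Fin d) → ℝ) (hg_meas : Measurable g)
    (m : ℕ) (f : Fin m → Fin (m+1)) (hf : ∀ j, (f j : ℕ) ≤ (j : ℕ)) :
    ∫⁻ x : Fin m → EuclideanSpace ℝ (Fin d),
      ∏ j : Fin m, ENNReal.ofReal (g ((Fin.cons 0 x : Fin (m+1) → EuclideanSpace ℝ (Fin d)) (f j) -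
        (Fin.cons 0 x : Fin (m+1) → EuclideanSpace ℝ (Fin d)) j.succ))
      = (∫⁻ z, ENNReal.ofReal (g z)) ^ m := by
  induction m with
  | zero =>
      simp only [Finset.univ_eq_empty, Finset.prod_empty, lintegral_one, pow_zero]
      simp [volume_pi, Measure.pi_univ]
  | succ m ih =>
      set I := ∫⁻ z, ENNReal.ofReal (g z) with hI
      have hlast : ∀ j : Fin (m+1), f j ≠ Fin.last (m+1) := by
        intro j hj
        have := hf j
        rw [hj] at this
        simp only [Fin.val_last] at this
        omega
      set f' : Fin (m+1) → Fin (m+1) := fun j => (f j).castPred (hlast j) with hf'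
      have hfc : ∀ j, (f' j).castSucc = f j := fun j => Fin.castSucc_castPred _ _
      have key : ∀ (x' : Fin m → EuclideanSpace ℝ (Fin d)) (t : EuclideanSpace ℝ (Fin d)),
          ∏ j : Fin (m+1),
            ENNReal.ofReal (g ((Fin.cons 0 (Fin.snoc x' t) : Fin (m+2) → EuclideanSpace ℝ (Fin d)) (f j) -
              (Fin.cons 0 (Fin.snoc x' t) : Fin (m+2) → EuclideanSpace ℝ (Fin d)) j.succ))
          = (∏ j : Fin m, ENNReal.ofReal (g ((Fin.cons 0 x' : Fin (m+1) → EuclideanSpace ℝ (Fin d)) (f' j.castSucc) -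
              (Fin.cons 0 x' : Fin (m+1) → EuclideanSpace ℝ (Fin d)) j.succ)))
            * ENNReal.ofReal (g ((Fin.cons 0 x' : Fin (m+1) → EuclideanSpace ℝ (Fin d)) (f' (Fin.last m)) - t)) := by
        intro x' t
        have hcast : ∀ i : Fin (m+1),
            (Fin.cons 0 (Fin.snoc x' t) : Fin (m+2) → EuclideanSpace ℝ (Fin d)) i.castSucc
              = (Fin.cons 0 x' : Fin (m+1) → EuclideanSpace ℝ (Fin d)) i := by
          intro i
          induction i using Fin.cases with
          | zero => simp
          | succ k => rw [← Fin.succ_castSucc]; simp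
        have hlastval : (Fin.cons 0 (Fin.snoc x' t) : Fin (m+2) → EuclideanSpace ℝ (Fin d)) (Fin.last (m+1)) = t := by
          rw [← Fin.succ_last, Fin.cons_succ, Fin.snoc_last]
        rw [Fin.prod_univ_castSucc]
        congr 1
        · apply Finset.prod_congr rfl
          intro j _
          rw [← hfc j.castSucc, hcast]
          congr 2
          rw [show (j.castSucc).succ = (j.succ).castSucc from (Fin.succ_castSucc j).symm, hcast]
        · rw [← hfc (Fin.last m), hcast, Fin.succ_last, hlastval]
      have hmeasF : Measurable (fun x : Fin (m+1) → EuclideanSpace ℝ (Fin d) => ∏ j : Fin (m+1),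
          ENNReal.ofReal (g ((Fin.cons 0 x : Fin (m+2) → EuclideanSpace ℝ (Fin d)) (f j) -
            (Fin.cons 0 x : Fin (m+2) → EuclideanSpace ℝ (Fin d)) j.succ))) := by
        apply Finset.measurable_prod
        intro j _
        exact ((hg_meas.comp ((meas_cons_apply (f j)).sub (meas_cons_apply j.succ)))).ennreal_ofReal
      set e := MeasurableEquiv.piFinSuccAbove (fun _ : Fin (m+1) => EuclideanSpace ℝ (Fin d)) (Fin.last m) with he
      have hfwd := volume_preserving_piFinSuccAbove (fun _ : Fin (m+1) => EuclideanSpace ℝ (Fin d)) (Fin.last m)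
      have hmp := MeasurePreserving.symm e hfwd
      have h1 : ∫⁻ x : Fin (m+1) → EuclideanSpace ℝ (Fin d), ∏ j : Fin (m+1),
            ENNReal.ofReal (g ((Fin.cons 0 x : Fin (m+2) → EuclideanSpace ℝ (Fin d)) (f j) -
              (Fin.cons 0 x : Fin (m+2) → EuclideanSpace ℝ (Fin d)) j.succ))
          = ∫⁻ p : EuclideanSpace ℝ (Fin d) × (Fin m → EuclideanSpace ℝ (Fin d)), (fun x : Fin (m+1) → EuclideanSpace ℝ (Fin d) => ∏ j : Fin (m+1),
            ENNReal.ofReal (g ((Fin.cons 0 x : Fin (m+2) → EuclideanSpace ℝ (Fin d)) (f j) -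
              (Fin.cons 0 x : Fin (m+2) → EuclideanSpace ℝ (Fin d)) j.succ))) (e.symm p) := by
        exact (hmp.lintegral_comp_emb e.symm.measurableEmbedding _).symm
      have hsymm : ∀ p : EuclideanSpace ℝ (Fin d) × (Fin m → EuclideanSpace ℝ (Fin d)), e.symm p = Fin.snoc p.2 p.1 := by
        intro p
        have : e.symm p = (Fin.last m).insertNth p.1 p.2 := by
          simp [he, MeasurableEquiv.piFinSuccAbove_symm_apply, Fin.insertNthEquiv]
        rw [this]
        exact Fin.insertNth_last' p.1 p.2
      rw [h1]
      have h2 : ∫⁻ p : EuclideanSpace ℝ (Fin d) × (Fin m → EuclideanSpace ℝ (Fin d)), (fun x : Fin (m+1) → EuclideanSpace ℝ (Fin d) => ∏ j : Fin (m+1),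
            ENNReal.ofReal (g ((Fin.cons 0 x : Fin (m+2) → EuclideanSpace ℝ (Fin d)) (f j) -
              (Fin.cons 0 x : Fin (m+2) → EuclideanSpace ℝ (Fin d)) j.succ))) (e.symm p)
          = ∫⁻ x' : Fin m → EuclideanSpace ℝ (Fin d), ∫⁻ t : EuclideanSpace ℝ (Fin d), (fun x : Fin (m+1) → EuclideanSpace ℝ (Fin d) => ∏ j : Fin (m+1),
            ENNReal.ofReal (g ((Fin.cons 0 x : Fin (m+2) → EuclideanSpace ℝ (Fin d)) (f j) -
              (Fin.cons 0 x : Fin (m+2) → EuclideanSpace ℝ (Fin d)) j.succ))) (Fin.snoc x' t) := by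
        have := lintegral_prod_symm (μ := (volume : Measure (EuclideanSpace ℝ (Fin d))))
          (ν := (volume : Measure (Fin m → EuclideanSpace ℝ (Fin d))))
          (f := fun p : EuclideanSpace ℝ (Fin d) × (Fin m → EuclideanSpace ℝ (Fin d)) => (fun x : Fin (m+1) → EuclideanSpace ℝ (Fin d) => ∏ j : Fin (m+1),
            ENNReal.ofReal (g ((Fin.cons 0 x : Fin (m+2) → EuclideanSpace ℝ (Fin d)) (f j) -
              (Fin.cons 0 x : Fin (m+2) → EuclideanSpace ℝ (Fin d)) j.succ))) (e.symm p))
          ((hmeasF.comp e.symm.measurable).aemeasurable)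
        rw [Measure.volume_eq_prod, this]
        apply lintegral_congr; intro x'
        apply lintegral_congr; intro t
        rw [hsymm (t, x')]
      rw [h2]
      have h3 : ∀ x' : Fin m → EuclideanSpace ℝ (Fin d), ∫⁻ t : EuclideanSpace ℝ (Fin d), (fun x : Fin (m+1) → EuclideanSpace ℝ (Fin d) => ∏ j : Fin (m+1),
            ENNReal.ofReal (g ((Fin.cons 0 x : Fin (m+2) → EuclideanSpace ℝ (Fin d)) (f j) -
              (Fin.cons 0 x : Fin (m+2) → EuclideanSpace ℝ (Fin d)) j.succ))) (Fin.snoc x' t)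
          = (∏ j : Fin m, ENNReal.ofReal (g ((Fin.cons 0 x' : Fin (m+1) → EuclideanSpace ℝ (Fin d)) (f' j.castSucc) -
              (Fin.cons 0 x' : Fin (m+1) → EuclideanSpace ℝ (Fin d)) j.succ))) * I := by
        intro x'
        simp only [key]
        rw [lintegral_const_mul' _ _ (by
          exact (ENNReal.prod_lt_top (fun j _ => ENNReal.ofReal_lt_top)).ne)]
        congr 1
        exact (Measure.measurePreserving_sub_left volume _).lintegral_comp hg_meas.ennreal_ofReal
      simp only [h3]
      rw [lintegral_mul_const _ (by
        apply Finset.measurable_prod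
        intro j _
        exact ((hg_meas.comp ((meas_cons_apply _).sub (meas_cons_apply j.succ)))).ennreal_ofReal)]
      rw [ih (fun j => f' j.castSucc) (fun j => by
        have h := hf j.castSucc
        have : (f' j.castSucc : ℕ) = (f j.castSucc : ℕ) := by rw [← hfc j.castSucc]; simp
        simpa [this] using h)]
      ring

open scoped Classical in
lemma pointwise_bound {d m : ℕ} (g : EuclideanSpace ℝ (Fin d) → ℝ)
    (hg01 : ∀ x, g x ∈ Set.Icc (0 : ℝ) 1)
    (hg_radial_mono : ∀ x y : EuclideanSpace ℝ (Fin d), ‖x‖ ≤ ‖y‖ → g y ≤ g x)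
    (H : SimpleGraph (Fin (m+1)))
    (σ : Fin (m+1) → Fin (m+1)) (f : Fin m → Fin (m+1))
    (hσ : Function.Injective σ)
    (hadj : ∀ j : Fin m, H.Adj (σ (f j)) (σ j.succ))
    (hle : ∀ j : Fin m, (f j : ℕ) ≤ (j : ℕ))
    (X : Fin (m+1) → EuclideanSpace ℝ (Fin d)) :
    (∏ i : Fin (m+1), ∏ j : Fin (m+1),
      if i < j then (if H.Adj i j then g (X i - X j) else 1 - g (X i - X j)) else 1)
    ≤ ∏ j : Fin m, g (X (σ (f j)) - X (σ j.succ)) := by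
  have gneg : ∀ z : EuclideanSpace ℝ (Fin d), g (-z) = g z := by
    intro z
    apply le_antisymm
    · apply hg_radial_mono; rw [norm_neg]
    · apply hg_radial_mono; rw [norm_neg]
  have gsym : ∀ a b : EuclideanSpace ℝ (Fin d), g (a - b) = g (b - a) := by
    intro a b
    rw [show a - b = -(b - a) by abel, gneg]
  set e : Fin (m+1) → Fin (m+1) → ℝ := fun i j =>
    if i < j then (if H.Adj i j then g (X i - X j) else 1 - g (X i - X j)) else 1 with he
  have he01 : ∀ i j, 0 ≤ e i j ∧ e i j ≤ 1 := by
    intro i j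
    simp only [he]
    split_ifs with h1 h2
    · exact ⟨(hg01 _).1, (hg01 _).2⟩
    · have := hg01 (X i - X j)
      obtain ⟨hl, hr⟩ := this
      constructor <;> linarith
    · exact ⟨zero_le_one, le_rfl⟩
  set q : Fin m → Fin (m+1) × Fin (m+1) := fun j =>
    (min (σ (f j)) (σ j.succ), max (σ (f j)) (σ j.succ)) with hq
  have hne : ∀ j, σ (f j) ≠ σ j.succ := fun j => (hadj j).ne
  have hqlt : ∀ j, (q j).1 < (q j).2 := fun j => min_lt_max.mpr (hne j)
  have hqadj : ∀ j, H.Adj (q j).1 (q j).2 := by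
    intro j
    rcases le_total (σ (f j)) (σ j.succ) with hh | hh
    · simpa [hq, min_eq_left hh, max_eq_right hh] using hadj j
    · simpa [hq, min_eq_right hh, max_eq_left hh] using (hadj j).symm
  have hqval : ∀ j, e (q j).1 (q j).2 = g (X (σ (f j)) - X (σ j.succ)) := by
    intro j
    simp only [he, if_pos (hqlt j), if_pos (hqadj j)]
    rcases le_total (σ (f j)) (σ j.succ) with hh | hh
    · simp only [hq, min_eq_left hh, max_eq_right hh]
    · simp only [hq, min_eq_right hh, max_eq_left hh]
      exact gsym _ _
  have hqinj : Function.Injective q := by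
    intro a b hab
    simp only [hq, Prod.mk.injEq] at hab
    rcases minmax_cases hab.1 hab.2 with ⟨h1, h2⟩ | ⟨h1, h2⟩
    · exact Fin.succ_injective _ (hσ h2)
    · -- crossed case: σ (f a) = σ b.succ and σ a.succ = σ (f b)
      have e1 : f a = b.succ := hσ h1
      have e2 : (a.succ : Fin (m+1)) = f b := hσ h2
      have l1 := hle a
      have l2 := hle b
      rw [e1] at l1
      rw [← e2] at l2
      simp only [Fin.val_succ] at l1 l2
      omega
  -- now the product inequality
  calc ∏ i : Fin (m+1), ∏ j : Fin (m+1), e i j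
      = ∏ p ∈ Finset.univ ×ˢ (Finset.univ : Finset (Fin (m+1))), e p.1 p.2 := by
        rw [Finset.prod_product]
    _ = (∏ p ∈ (Finset.univ ×ˢ Finset.univ) \ Finset.image q Finset.univ, e p.1 p.2) *
          ∏ p ∈ Finset.image q Finset.univ, e p.1 p.2 := by
        rw [Finset.prod_sdiff (Finset.subset_univ _ |>.trans (by rw [Finset.univ_product_univ]))]
    _ ≤ ∏ p ∈ Finset.image q Finset.univ, e p.1 p.2 := by
        apply mul_le_of_le_one_left
        · exact Finset.prod_nonneg fun p _ => (he01 p.1 p.2).1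
        · exact Finset.prod_le_one (fun p _ => (he01 p.1 p.2).1) (fun p _ => (he01 p.1 p.2).2)
    _ = ∏ j : Fin m, e (q j).1 (q j).2 := by
        rw [Finset.prod_image (fun a _ b _ hab => hqinj hab)]
    _ = ∏ j : Fin m, g (X (σ (f j)) - X (σ j.succ)) := by
        exact Finset.prod_congr rfl fun j _ => hqval j

open scoped Classical in
/-- The probability `g₂(x₁, …, x_k)` that the random graph on the points `x₁, …, x_k`,
in which each pair `{x_i, x_j}` is independently joined by an edge with probability
`g (x_i - x_j)`, is connected: the sum over all connected simple graphs `H` on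
`{1, …, k}` of the product of `g (x_i - x_j)` over edges of `H` and of
`1 - g (x_i - x_j)` over non-edges of `H`. -/
noncomputable def gtwo {d k : ℕ} (g : EuclideanSpace ℝ (Fin d) → ℝ)
    (x : Fin k → EuclideanSpace ℝ (Fin d)) : ℝ :=
  ∑ H : SimpleGraph (Fin k),
    if H.Connected then
      ∏ i : Fin k, ∏ j : Fin k,
        if i < j then (if H.Adj i j then g (x i - x j) else 1 - g (x i - x j)) else 1
    else 0

/-- For a connection function `g` (radially symmetric, nonincreasing in the norm,
with `0 < ∫ g < ∞`), the probability `g₂(𝟎, x₁, …, x_{k-1})` that `k` given points form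
a connected random graph is integrable over `(ℝ^d)^{k-1}`. Here `k = m + 1 ≥ 2`. -/
theorem gtwo_integrable (d : ℕ) (hd : 1 ≤ d) (g : EuclideanSpace ℝ (Fin d) → ℝ)
    (hg_meas : Measurable g) (hg01 : ∀ x, g x ∈ Set.Icc (0 : ℝ) 1)
    (hg_radial_mono : ∀ x y : EuclideanSpace ℝ (Fin d), ‖x‖ ≤ ‖y‖ → g y ≤ g x)
    (hg_int_pos : 0 < ∫⁻ x, ENNReal.ofReal (g x))
    (hg_int_fin : ∫⁻ x, ENNReal.ofReal (g x) < ⊤)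
    (m : ℕ) (hm : 1 ≤ m) :
    ∫⁻ x : Fin m → EuclideanSpace ℝ (Fin d),
        ENNReal.ofReal (gtwo g (Fin.cons 0 x)) < ⊤ := by
  classical
  have key : ∀ H : SimpleGraph (Fin (m+1)), H.Connected →
      ∃ pp : (Fin (m+1) → Fin (m+1)) × (Fin m → Fin (m+1)),
        Function.Bijective pp.1 ∧ pp.1 0 = 0 ∧ (∀ j, (pp.2 j : ℕ) ≤ (j : ℕ)) ∧
        ∀ j : Fin m, H.Adj (pp.1 (pp.2 j)) (pp.1 j.succ) := by
    intro H hc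
    obtain ⟨σ, hbij, h0, hprop⟩ := enumeration H hc
    choose f hle hadj using hprop
    exact ⟨(σ, f), hbij, h0, hle, hadj⟩
  choose pp hbij h0 hle hadj using key
  set bound : SimpleGraph (Fin (m+1)) → (Fin m → EuclideanSpace ℝ (Fin d)) → ENNReal :=
    fun H x => if h : H.Connected then
      ∏ j : Fin m, ENNReal.ofReal
        (g ((Fin.cons 0 x : Fin (m+1) → EuclideanSpace ℝ (Fin d)) ((pp H h).1 ((pp H h).2 j)) -
          (Fin.cons 0 x : Fin (m+1) → EuclideanSpace ℝ (Fin d)) ((pp H h).1 j.succ)))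
    else 0 with hbound
  have hpt : ∀ x : Fin m → EuclideanSpace ℝ (Fin d),
      ENNReal.ofReal (gtwo g (Fin.cons 0 x)) ≤ ∑ H : SimpleGraph (Fin (m+1)), bound H x := by
    intro x
    rw [gtwo]
    rw [ENNReal.ofReal_sum_of_nonneg (fun H _ => by
      split_ifs with hc
      · apply Finset.prod_nonneg
        intro i _
        apply Finset.prod_nonneg
        intro j _
        split_ifs with h1 h2
        · exact (hg01 _).1
        · have := hg01 ((Fin.cons 0 x : Fin (m+1) → EuclideanSpace ℝ (Fin d)) i -
            (Fin.cons 0 x : Fin (m+1) → EuclideanSpace ℝ (Fin d)) j)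
          linarith [this.2]
        · exact zero_le_one
      · exact le_rfl)]
    apply Finset.sum_le_sum
    intro H _
    by_cases hc : H.Connected
    · rw [if_pos hc, hbound]
      simp only [dif_pos hc]
      rw [← ENNReal.ofReal_prod_of_nonneg (fun j _ => (hg01 _).1)]
      apply ENNReal.ofReal_le_ofReal
      exact pointwise_bound g hg01 hg_radial_mono H (pp H hc).1 (pp H hc).2
        (hbij H hc).injective (hadj H hc) (hle H hc) _
    · rw [if_neg hc, hbound]
      simp only [dif_neg hc]
      simp
  have hmeas : ∀ H : SimpleGraph (Fin (m+1)), Measurable (bound H) := by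
    intro H
    by_cases hc : H.Connected
    · simp only [hbound, dif_pos hc]
      apply Finset.measurable_prod
      intro j _
      exact (hg_meas.comp ((meas_cons_apply _).sub (meas_cons_apply _))).ennreal_ofReal
    · simp only [hbound, dif_neg hc]
      exact measurable_const
  calc ∫⁻ x : Fin m → EuclideanSpace ℝ (Fin d), ENNReal.ofReal (gtwo g (Fin.cons 0 x))
      ≤ ∫⁻ x, ∑ H : SimpleGraph (Fin (m+1)), bound H x := lintegral_mono hpt
    _ = ∑ H : SimpleGraph (Fin (m+1)), ∫⁻ x, bound H x :=
        lintegral_finset_sum _ (fun H _ => hmeas H)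
    _ < ⊤ := by
        rw [ENNReal.sum_lt_top]
        intro H _
        by_cases hc : H.Connected
        · -- change of variables by the permutation, then the staircase lemma
          set σ := (pp H hc).1 with hσdef
          set f := (pp H hc).2 with hfdef
          have hσinj : Function.Injective σ := (hbij H hc).injective
          have hne0 : ∀ i : Fin m, σ i.succ ≠ 0 := by
            intro i hcontra
            have : σ i.succ = σ 0 := by rw [hcontra, hσdef, h0 H hc]
            exact Fin.succ_ne_zero i (hσinj this)
          set τ : Fin m → Fin m := fun i => (σ i.succ).pred (hne0 i) with hτdef
          have hτinj : Function.Injective τ := by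
            intro a b hab
            have hab' : (σ a.succ).pred (hne0 a) = (σ b.succ).pred (hne0 b) := hab
            have : σ a.succ = σ b.succ := by
              rw [← Fin.succ_pred (σ a.succ) (hne0 a), ← Fin.succ_pred (σ b.succ) (hne0 b), hab']
            exact Fin.succ_injective _ (hσinj this)
          set eτ : Fin m ≃ Fin m := Equiv.ofBijective τ
            ((Finite.injective_iff_bijective).1 hτinj) with heτ
          have hcompat : ∀ (x : Fin m → EuclideanSpace ℝ (Fin d)) (i : Fin (m+1)),
              (Fin.cons 0 x : Fin (m+1) → EuclideanSpace ℝ (Fin d)) (σ i)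
                = (Fin.cons 0 (x ∘ τ) : Fin (m+1) → EuclideanSpace ℝ (Fin d)) i := by
            intro x i
            induction i using Fin.cases with
            | zero =>
                rw [hσdef, h0 H hc]
                simp
            | succ k =>
                rw [← Fin.succ_pred (σ k.succ) (hne0 k)]
                simp only [Fin.cons_succ]
                rfl
          set G : (Fin m → EuclideanSpace ℝ (Fin d)) → ENNReal := fun y =>
            ∏ j : Fin m, ENNReal.ofReal
              (g ((Fin.cons 0 y : Fin (m+1) → EuclideanSpace ℝ (Fin d)) (f j) -
                (Fin.cons 0 y : Fin (m+1) → EuclideanSpace ℝ (Fin d)) j.succ)) with hG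
          set ME := MeasurableEquiv.piCongrLeft (fun _ : Fin m => EuclideanSpace ℝ (Fin d)) eτ
            with hME
          have hMEsymm : ∀ x : Fin m → EuclideanSpace ℝ (Fin d), ME.symm x = x ∘ τ := by
            intro x
            funext i
            rfl
          have hMP := MeasurePreserving.symm ME
            (volume_measurePreserving_piCongrLeft (fun _ : Fin m => EuclideanSpace ℝ (Fin d)) eτ)
          have heq : ∫⁻ x, bound H x = ∫⁻ x, G (ME.symm x) := by
            apply lintegral_congr
            intro x
            rw [hbound]
            simp only [dif_pos hc]
            rw [hMEsymm x, hG]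
            simp only [← hσdef, ← hfdef]
            exact Finset.prod_congr rfl fun j _ => by rw [hcompat x (f j), hcompat x j.succ]
          rw [heq, hMP.lintegral_comp_emb ME.symm.measurableEmbedding G, hG]
          rw [staircase g hg_meas m f (hle H hc)]
          exact ENNReal.pow_lt_top hg_int_fin
        · simp only [hbound, dif_neg hc]
          simp
end
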